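/- arXiv:2108.08067 — 6 statements merged into one kernel-verified Lean document; each statement's English description precedes it below -/
import Mathlib

section
/- In a 2-CNF implication digraph, a contradictory strongly connected component that is source-like (no arc enters it from outside) is also sink-like (no arc leaves it), i.e., it is isolated. -/
abbrev Lit (n : ℕ) := Fin n × Bool

def negLit {n : ℕ} (x : Lit n) : Lit n := (x.1, !x.2)

def Reach {n : ℕ} (E : Lit n → Lit n → Prop) : Lit n → Lit n → Prop :=
  Relation.ReflTransGen E

def IsSCC {n : ℕ} (E : Lit n → Lit n → Prop) (C : Set (Lit n)) : Prop :=
  C.Nonempty ∧ (∀ x ∈ C, ∀ y ∈ C, Reach E x y) ∧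
    ∀ D : Set (Lit n), C ⊆ D → (∀ x ∈ D, ∀ y ∈ D, Reach E x y) → D = C

def ContraLit {n : ℕ} (E : Lit n → Lit n → Prop) (x : Lit n) : Prop :=
  Reach E x (negLit x) ∧ Reach E (negLit x) x

/-- No arc enters `C` from outside. -/
def SourceLike {n : ℕ} (E : Lit n → Lit n → Prop) (C : Set (Lit n)) : Prop :=
  ∀ u ∉ C, ∀ v ∈ C, ¬ E u v

/-- No arc leaves `C`. -/
def SinkLike {n : ℕ} (E : Lit n → Lit n → Prop) (C : Set (Lit n)) : Prop :=
  ∀ u ∈ C, ∀ v ∉ C, ¬ E u v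

/-- A contradictory SCC of an implication digraph that is source-like is also sink-like,
i.e. it is isolated. -/
theorem stmt1 {n : ℕ} (E : Lit n → Lit n → Prop)
    (hsym : ∀ k l, E k l → E (negLit l) (negLit k))
    (C : Set (Lit n)) (hC : IsSCC E C)
    (hcontra : ∃ x ∈ C, ContraLit E x)
    (hsrc : SourceLike E C) :
    SinkLike E C := by
  obtain ⟨hne, hconn, hmax⟩ := hC
  obtain ⟨x, hxC, hx1, hx2⟩ := hcontra
  have negneg : ∀ a : Lit n, negLit (negLit a) = a := by
    intro a; simp [negLit]
  have reach_neg : ∀ {a b : Lit n}, Reach E a b → Reach E (negLit b) (negLit a) := by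
    intro a b h
    induction h with
    | refl => exact Relation.ReflTransGen.refl
    | tail _ h2 ih => exact Relation.ReflTransGen.head (hsym _ _ h2) ih
  have hnegC : ∀ y ∈ C, negLit y ∈ C := by
    intro y hy
    set D := C ∪ negLit '' C with hD
    have rDx : ∀ z ∈ D, Reach E z x := by
      rintro z (hz | ⟨w, hw, rfl⟩)
      · exact hconn z hz x hxC
      · exact Relation.ReflTransGen.trans (reach_neg (hconn x hxC w hw)) hx2
    have rxD : ∀ z ∈ D, Reach E x z := by
      rintro z (hz | ⟨w, hw, rfl⟩)
      · exact hconn x hxC z hz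
      · exact Relation.ReflTransGen.trans hx1 (reach_neg (hconn w hw x hxC))
    have key : ∀ a ∈ D, ∀ b ∈ D, Reach E a b := fun a ha b hb =>
      Relation.ReflTransGen.trans (rDx a ha) (rxD b hb)
    have hDC := hmax D Set.subset_union_left key
    rw [← hDC]
    exact Or.inr ⟨y, hy, rfl⟩
  intro u hu v hv huv
  have hnv : negLit v ∉ C := by
    intro h
    have := hnegC _ h
    rw [negneg] at this
    exact hv this
  exact hsrc (negLit v) hnv (negLit u) (hnegC u hu) (hsym u v huv)
end

section
/- In a 2-CNF implication digraph, if C and C' are two distinct contradictory strongly connected components, then there is no directed path from any vertex of C to any vertex of C'. -/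
/-- There is no directed path from one contradictory SCC to a distinct one. -/
theorem stmt2 {n : ℕ} (E : Lit n → Lit n → Prop)
    (hsym : ∀ k l, E k l → E (negLit l) (negLit k))
    (C C' : Set (Lit n)) (hC : IsSCC E C) (hC' : IsSCC E C') (hne : C ≠ C')
    (hcontra : ∃ x ∈ C, ContraLit E x) (hcontra' : ∃ x ∈ C', ContraLit E x) :
    ∀ u ∈ C, ∀ v ∈ C', ¬ Reach E u v := by
  have hrev : ∀ a b, Reach E a b → Reach E (negLit b) (negLit a) := by
    intro a b h
    induction h with
    | refl => exact Relation.ReflTransGen.refl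
    | tail _ he ih =>
      exact Relation.ReflTransGen.trans (Relation.ReflTransGen.single (hsym _ _ he)) ih
  rintro u hu v hv huv
  obtain ⟨x, hx, hx1, hx2⟩ := hcontra
  obtain ⟨y, hy, hy1, hy2⟩ := hcontra'
  obtain ⟨_, hCr, hCmax⟩ := hC
  obtain ⟨_, hC'r, hC'max⟩ := hC'
  -- Reach x y
  have hxy : Reach E x y :=
    Relation.ReflTransGen.trans (hCr x hx u hu)
      (Relation.ReflTransGen.trans huv (hC'r v hv y hy))
  -- Reach y x : y → ¬y → ¬x → x
  have hyx : Reach E y x :=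
    Relation.ReflTransGen.trans hy1 (Relation.ReflTransGen.trans (hrev _ _ hxy) hx2)
  -- all pairs in C ∪ C' mutually reachable
  have hmut : ∀ a ∈ C ∪ C', ∀ b ∈ C ∪ C', Reach E a b := by
    rintro a (ha | ha) b (hb | hb)
    · exact hCr a ha b hb
    · exact Relation.ReflTransGen.trans (hCr a ha x hx)
        (Relation.ReflTransGen.trans hxy (hC'r y hy b hb))
    · exact Relation.ReflTransGen.trans (hC'r a ha y hy)
        (Relation.ReflTransGen.trans hyx (hCr x hx b hb))
    · exact hC'r a ha b hb
  have h1 := hCmax (C ∪ C') Set.subset_union_left hmut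
  have h2 := hC'max (C ∪ C') Set.subset_union_right hmut
  exact hne (h1 ▸ h2)
end

section
/- In a 2-CNF implication digraph, if C is an ordinary (non-contradictory) source-like strongly connected component, then the set ¬C of negations of its literals is a sink-like strongly connected component disjoint from C. -/
lemma negLit_negLit {n : ℕ} (x : Lit n) : negLit (negLit x) = x := by
  simp [negLit]

lemma reach_neg {n : ℕ} {E : Lit n → Lit n → Prop}
    (hsym : ∀ k l, E k l → E (negLit l) (negLit k))
    {a b : Lit n} (h : Reach E a b) : Reach E (negLit b) (negLit a) := by
  induction h with
  | refl => exact Relation.ReflTransGen.refl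
  | tail _ hbc ih => exact Relation.ReflTransGen.head (hsym _ _ hbc) ih

/-- If `C` is an ordinary (non-contradictory) source-like SCC of an implication digraph,
then the set of negations of its literals is a sink-like SCC disjoint from `C`. -/
theorem stmt3 {n : ℕ} (E : Lit n → Lit n → Prop)
    (hsym : ∀ k l, E k l → E (negLit l) (negLit k))
    (C : Set (Lit n)) (hC : IsSCC E C)
    (hord : ∀ x ∈ C, ¬ ContraLit E x)
    (hsrc : SourceLike E C) :
    IsSCC E (negLit '' C) ∧ SinkLike E (negLit '' C) ∧ Disjoint C (negLit '' C) := by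
  obtain ⟨⟨x0, hx0⟩, hmut, hmax⟩ := hC
  refine ⟨⟨⟨negLit x0, ⟨x0, hx0, rfl⟩⟩, ?_, ?_⟩, ?_, ?_⟩
  · rintro _ ⟨x, hx, rfl⟩ _ ⟨y, hy, rfl⟩
    exact reach_neg hsym (hmut y hy x hx)
  · -- maximality
    intro D hsub hDmut
    ext d
    constructor
    · intro hd
      have hnx0 : negLit x0 ∈ D := hsub ⟨x0, hx0, rfl⟩
      -- negLit d is mutually reachable with x0
      have h1 : Reach E (negLit d) x0 := by
        have := reach_neg hsym (hDmut (negLit x0) hnx0 d hd)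
        rwa [negLit_negLit] at this
      have h2 : Reach E x0 (negLit d) := by
        have := reach_neg hsym (hDmut d hd (negLit x0) hnx0)
        rwa [negLit_negLit] at this
      have hD' : insert (negLit d) C = C := by
        apply hmax
        · exact Set.subset_insert _ _
        · rintro a (rfl | ha) b (rfl | hb)
          · exact Relation.ReflTransGen.refl
          · exact Relation.ReflTransGen.trans h1 (hmut x0 hx0 b hb)
          · exact Relation.ReflTransGen.trans (hmut a ha x0 hx0) h2
          · exact hmut a ha b hb
      have : negLit d ∈ C := hD'.symm ▸ Set.mem_insert _ C
      exact ⟨negLit d, this, negLit_negLit d⟩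
    · intro hd; exact hsub hd
  · -- sink-like
    rintro _ ⟨x, hx, rfl⟩ v hv hE
    have hEv : E (negLit v) x := by
      have := hsym _ _ hE
      rwa [negLit_negLit] at this
    have hnv : negLit v ∈ C := by
      by_contra hnv
      exact hsrc (negLit v) hnv x hx hEv
    exact hv ⟨negLit v, hnv, negLit_negLit v⟩
  · -- disjoint
    rw [Set.disjoint_left]
    rintro a ha ⟨y, hy, rfl⟩
    exact hord y hy ⟨hmut y hy (negLit y) ha, hmut (negLit y) ha y hy⟩
end

section
/- In a satisfiable 2-CNF, if C is a source-like SCC of the implication digraph, then any satisfying assignment of the 2-CNF obtained by deleting the variables of C and ¬C extends to a satisfying assignment of the original formula by setting all literals of C to False (equivalently, all literals of ¬C to True). -/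
def ClauseOK {n : ℕ} (c : Sym2 (Lit n)) : Prop := ¬ (c.map Prod.fst).IsDiag

def impArc {n : ℕ} (F : Finset (Sym2 (Lit n))) (u v : Lit n) : Prop :=
  s(negLit u, v) ∈ F

def Satisfies {n : ℕ} (a : Fin n → Bool) (F : Finset (Sym2 (Lit n))) : Prop :=
  ∀ c ∈ F, ∃ x ∈ c, a x.1 = x.2

/-- In a satisfiable 2-CNF `F`, let `C` be a source-like SCC of its implication digraph.
If `a` satisfies the formula obtained from `F` by deleting the variables of `C` and `¬C`
(i.e. `a` satisfies every clause of `F` omitting no variable of `C`), then the assignment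
`a'` obtained from `a` by setting all literals of `C` to False (equivalently, all literals
of `¬C` to True) and keeping `a` on the remaining variables satisfies `F`. -/
theorem stmt6 {n : ℕ} (F : Finset (Sym2 (Lit n))) (hF : ∀ c ∈ F, ClauseOK c)
    (hsat : ∃ a : Fin n → Bool, Satisfies a F)
    (C : Set (Lit n)) (hC : IsSCC (impArc F) C) (hsrc : SourceLike (impArc F) C)
    (a : Fin n → Bool)
    (ha : ∀ c ∈ F, (∀ x ∈ c, ∀ b : Bool, ((x.1, b) : Lit n) ∉ C) → ∃ x ∈ c, a x.1 = x.2)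
    (a' : Fin n → Bool)
    (hfalse : ∀ x ∈ C, a' x.1 = !x.2)
    (hagree : ∀ i : Fin n, (∀ b : Bool, ((i, b) : Lit n) ∉ C) → a' i = a i) :
    Satisfies a' F := by
  intro c hc
  induction c using Sym2.inductionOn with
  | hf k l =>
    by_cases h : ∀ x ∈ s(k,l), ∀ b : Bool, ((x.1, b) : Lit n) ∉ C
    · obtain ⟨x, hx, hax⟩ := ha _ hc h
      exact ⟨x, hx, by rw [hagree x.1 (h x hx)]; exact hax⟩
    · push_neg at h
      obtain ⟨x, hx, b, hb⟩ := h
      by_cases hbx : b = !x.2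
      · refine ⟨x, hx, ?_⟩
        have := hfalse (x.1, b) hb
        simp only [hbx] at this
        simpa using this
      · have hbeq : b = x.2 := by cases b <;> cases hxx : x.2 <;> simp_all
        have hxC : x ∈ C := by rw [← Prod.mk.eta (p := x), ← hbeq]; exact hb
        rcases Sym2.mem_iff.mp hx with rfl | rfl
        · have harc : impArc F (negLit l) x := by
            unfold impArc negLit
            simpa [Sym2.eq_swap] using hc
          have hlC : negLit l ∈ C := by
            by_contra hn
            exact hsrc _ hn _ hxC harc
          have := hfalse _ hlC
          refine ⟨l, Sym2.mem_mk_right _ _, ?_⟩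
          simpa [negLit] using this
        · have harc : impArc F (negLit k) x := by
            unfold impArc negLit
            simpa using hc
          have hkC : negLit k ∈ C := by
            by_contra hn
            exact hsrc _ hn _ hxC harc
          have := hfalse _ hkC
          refine ⟨k, Sym2.mem_mk_left _ _, ?_⟩
          simpa [negLit] using this
end

section
/- Define the Implication generating function of a sequence (b_n(w)) as B̈(z,w) = Σ_{n≥0} b_n(w)/(1+w)^{n(n-1)} · z^n/(2^n n!), and the Graphic GF of (a_n(w)) as Â(z,w) = Σ_{n≥0} a_n(w)/(1+w)^{binomial(n,2)} · z^n/n!. Then the product Â(z,w)·B̈(z,w) is the Implication GF of the sequence c_n(w) = Σ_{k=0}^n binomial(n,k) 2^k (1+w)^{2k(n-k) + k(k-1)/2} a_k(w) b_{n-k}(w). -/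
open PowerSeries

noncomputable def Wp : PowerSeries ℚ := 1 + PowerSeries.X

noncomputable def Wi : PowerSeries ℚ := Ring.inverse Wp

/-- The Graphic GF `Σ_n a_n(w) (1+w)^{-C(n,2)} z^n / n!`. -/
noncomputable def graphicGF (f : ℕ → PowerSeries ℚ) : PowerSeries (PowerSeries ℚ) :=
  PowerSeries.mk fun n => ((n.factorial : ℚ)⁻¹) • (f n * Wi ^ n.choose 2)

/-- The Implication GF `Σ_n b_n(w) (1+w)^{-n(n-1)} z^n / (2^n n!)`. -/
noncomputable def implGF (f : ℕ → PowerSeries ℚ) : PowerSeries (PowerSeries ℚ) :=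
  PowerSeries.mk fun n => (((2 : ℚ) ^ n * n.factorial)⁻¹) • (f n * Wi ^ (n * (n - 1)))

lemma WpWi : Wp * Wi = 1 := by
  apply Ring.mul_inverse_cancel
  rw [Wp, PowerSeries.isUnit_iff_constantCoeff]; simp

lemma two_choose_two (k : ℕ) : k.choose 2 + k.choose 2 = k * (k - 1) := by
  rcases k with _ | j
  · simp
  · rw [Nat.choose_two_right]
    simp only [Nat.add_sub_cancel]
    have h2 : 2 ∣ (j + 1) * j := by
      rcases Nat.even_or_odd j with h | h
      · exact Dvd.dvd.mul_left h.two_dvd _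
      · exact Dvd.dvd.mul_right (by simpa using h.add_one.two_dvd) _
    omega

lemma expo (k m : ℕ) :
    (k + m) * ((k + m) - 1) =
      (2 * k * m + k.choose 2) + (k.choose 2 + m * (m - 1)) := by
  have hk := two_choose_two k
  rcases k with _ | j
  · simp
  · rcases m with _ | i
    · simp only [Nat.add_zero, Nat.mul_zero, Nat.zero_mul, Nat.zero_add, Nat.mul_zero,
        Nat.add_zero]
      omega
    · have h1 : j + 1 + (i + 1) - 1 = j + i + 1 := by omega
      have h2 : i + 1 - 1 = i := by omega
      have h3 : j + 1 - 1 = j := by omega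
      rw [h3] at hk
      rw [h1, h2]
      apply Nat.eq_of_mul_eq_mul_left (show 0 < 2 by norm_num)
      zify at hk ⊢
      linear_combination -2 * hk

/-- The product of a Graphic GF and an Implication GF is the Implication GF of the
implication-product convolution
`c_n = Σ_k C(n,k) 2^k (1+w)^{2k(n-k) + k(k-1)/2} a_k b_{n-k}`. -/
theorem stmt12 (a b : ℕ → PowerSeries ℚ) :
    graphicGF a * implGF b
      = implGF (fun n => ∑ k ∈ Finset.range (n + 1),
          (n.choose k : PowerSeries ℚ) * 2 ^ k * Wp ^ (2 * k * (n - k) + k.choose 2)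
            * a k * b (n - k)) := by
  refine PowerSeries.ext fun n => ?_
  rw [PowerSeries.coeff_mul, Finset.Nat.sum_antidiagonal_eq_sum_range_succ_mk]
  simp only [graphicGF, implGF, coeff_mk, Finset.sum_mul, Finset.smul_sum]
  apply Finset.sum_congr rfl
  intro k hk
  have hkn : k ≤ n := Nat.lt_succ_iff.mp (Finset.mem_range.mp hk)
  set A := PowerSeries (PowerSeries ℚ)
  have hexpo : n * (n - 1) =
      (2 * k * (n - k) + k.choose 2) + (k.choose 2 + (n - k) * ((n - k) - 1)) := by
    have := expo k (n - k)
    rwa [Nat.add_sub_cancel' hkn] at this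
  have hcancel : Wp ^ (2 * k * (n - k) + k.choose 2) * Wi ^ (2 * k * (n - k) + k.choose 2)
      = (1 : PowerSeries ℚ) := by rw [← mul_pow, WpWi, one_pow]
  have hq : ((k.factorial : ℚ))⁻¹ * (((2 : ℚ) ^ (n - k) * (n - k).factorial))⁻¹
      = (((2 : ℚ) ^ n * n.factorial))⁻¹ * (n.choose k : ℚ) * 2 ^ k := by
    have hfac : (n.choose k : ℚ) * k.factorial * (n - k).factorial = n.factorial := by
      exact_mod_cast congrArg (Nat.cast : ℕ → ℚ)
        (Nat.choose_mul_factorial_mul_factorial hkn)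
    have h2 : (2 : ℚ) ^ k * 2 ^ (n - k) = 2 ^ n := by
      rw [← pow_add, Nat.add_sub_cancel' hkn]
    have hk0 : (k.factorial : ℚ) ≠ 0 := Nat.cast_ne_zero.mpr k.factorial_ne_zero
    have hnk0 : ((n - k).factorial : ℚ) ≠ 0 := Nat.cast_ne_zero.mpr (n - k).factorial_ne_zero
    have hn0 : (n.factorial : ℚ) ≠ 0 := Nat.cast_ne_zero.mpr n.factorial_ne_zero
    field_simp
    linear_combination (-(2 : ℚ) ^ k * 2 ^ (n - k)) * hfac - (n.factorial : ℚ) * h2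
  have hqA : (algebraMap ℚ (PowerSeries ℚ)) ((k.factorial : ℚ))⁻¹
      * (algebraMap ℚ (PowerSeries ℚ)) (((2 : ℚ) ^ (n - k) * (n - k).factorial))⁻¹
      = (algebraMap ℚ (PowerSeries ℚ)) (((2 : ℚ) ^ n * n.factorial))⁻¹
        * (n.choose k : PowerSeries ℚ) * 2 ^ k := by
    rw [← map_mul, hq]; simp [map_mul, map_pow, map_ofNat]
  simp only [Algebra.smul_def, hexpo, pow_add]
  linear_combination (a k * b (n - k) * Wi ^ (k.choose 2)
      * Wi ^ ((n - k) * ((n - k) - 1))) * hqA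
    - ((algebraMap ℚ (PowerSeries ℚ)) (((2 : ℚ) ^ n * n.factorial))⁻¹
        * (n.choose k : PowerSeries ℚ) * (2 : PowerSeries ℚ) ^ k * a k * b (n - k)
        * Wi ^ (k.choose 2) * Wi ^ ((n - k) * ((n - k) - 1))) * hcancel
end

section
/- Let G(z,w) = Σ_{n≥0} (1+w)^{binomial(n,2)} z^n/n!. Then the formal power series G(z,w) ⊙_z (1/G(z,w)) has constant term 1 (in z), so its formal logarithm is well-defined, and the EGF of strongly connected labeled digraphs SCC(z,w) satisfies exp(−SCC(z,w)) = G(z,w) ⊙_z 1/G(z,w), where SCC(z,w) = Σ_{n≥1} s_n(w) z^n/n! counts strongly connected digraphs on n labeled vertices by arcs. -/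
open PowerSeries

open scoped Classical

/-- Exponential Hadamard product w.r.t. `z`. -/
noncomputable def ehad (A B : PowerSeries (PowerSeries ℚ)) : PowerSeries (PowerSeries ℚ) :=
  PowerSeries.mk fun n =>
    (n.factorial : ℚ) • (PowerSeries.coeff n A * PowerSeries.coeff n B)

/-- The EGF of labeled graphs: `G(z,w) = Σ (1+w)^{C(n,2)} zⁿ/n!`. -/
noncomputable def Ggf : PowerSeries (PowerSeries ℚ) :=
  PowerSeries.mk fun n => ((n.factorial : ℚ)⁻¹) • (Wp ^ n.choose 2)

/-- A digraph on `Fin n` (a set of arcs, no loops) is strongly connected if every vertex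
reaches every other by a directed path. -/
def StrongConnD {n : ℕ} (D : Finset (Fin n × Fin n)) : Prop :=
  ∀ u v : Fin n, Relation.ReflTransGen (fun a b => (a, b) ∈ D) u v

/-- `s_n(w) = Σ_m (#strongly connected digraphs on n labeled vertices with m arcs) w^m`. -/
noncomputable def sPoly (n : ℕ) : PowerSeries ℚ :=
  PowerSeries.mk fun m =>
    ((Finset.univ.filter fun D : Finset (Fin n × Fin n) =>
        (∀ p ∈ D, p.1 ≠ p.2) ∧ StrongConnD D ∧ D.card = m).card : ℚ)

/-- The EGF of strongly connected labeled digraphs, `SCC(z,w) = Σ_{n≥1} s_n(w) zⁿ/n!`. -/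
noncomputable def SCCgf : PowerSeries (PowerSeries ℚ) :=
  PowerSeries.mk fun n => if n = 0 then 0 else ((n.factorial : ℚ)⁻¹) • sPoly n

/-- `exp` of a power series with zero constant term (the coefficient of `zⁿ` in
`exp A = Σ_k A^k/k!` only involves `k ≤ n`). -/
noncomputable def expSeries (A : PowerSeries (PowerSeries ℚ)) : PowerSeries (PowerSeries ℚ) :=
  PowerSeries.mk fun n =>
    PowerSeries.coeff n (∑ k ∈ Finset.range (n + 1), ((k.factorial : ℚ)⁻¹) • A ^ k)

/-! ### Algebraic part -/

open Finset

noncomputable abbrev RW := PowerSeries ℚ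

noncomputable def ncoeff (n : ℕ) (A : PowerSeries RW) : RW :=
  (n.factorial : ℚ) • PowerSeries.coeff n A

lemma factorial_cast_ne (n : ℕ) : ((n.factorial : ℚ)) ≠ 0 := by
  exact_mod_cast n.factorial_ne_zero

lemma ncoeff_inj {n : ℕ} {A B : PowerSeries RW} (h : ncoeff n A = ncoeff n B) :
    PowerSeries.coeff n A = PowerSeries.coeff n B := by
  have := congrArg (fun x => ((n.factorial : ℚ))⁻¹ • x) h
  simpa [ncoeff, smul_smul, inv_mul_cancel₀ (factorial_cast_ne n)] using this

lemma ncoeff_one (n : ℕ) : ncoeff n (1 : PowerSeries RW) = if n = 0 then 1 else 0 := by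
  simp [ncoeff, PowerSeries.coeff_one]
  split <;> simp_all [Nat.factorial]

lemma ncoeff_mul (A B : PowerSeries RW) (n : ℕ) :
    ncoeff n (A * B) = ∑ k ∈ range (n+1),
      (n.choose k : ℚ) • (ncoeff k A * ncoeff (n-k) B) := by
  rw [ncoeff, PowerSeries.coeff_mul, Finset.Nat.sum_antidiagonal_eq_sum_range_succ_mk,
    Finset.smul_sum]
  refine Finset.sum_congr rfl fun k hk => ?_
  have hkn : k ≤ n := Nat.lt_succ_iff.mp (mem_range.mp hk)
  rw [ncoeff, ncoeff, smul_mul_assoc, mul_smul_comm, smul_smul, smul_smul]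
  congr 1
  rw [← Nat.choose_mul_factorial_mul_factorial hkn]
  push_cast
  ring

lemma ncoeff_ehad (A B : PowerSeries RW) (n : ℕ) :
    ncoeff n (ehad A B) = ncoeff n A * ncoeff n B := by
  simp only [ncoeff, ehad, PowerSeries.coeff_mk, smul_smul, smul_mul_assoc, mul_smul_comm]

lemma ncoeff_Ggf (n : ℕ) : ncoeff n Ggf = Wp ^ n.choose 2 := by
  simp [ncoeff, Ggf, PowerSeries.coeff_mk, smul_smul,
    mul_inv_cancel₀ (factorial_cast_ne n)]

lemma constantCoeff_Ggf : PowerSeries.constantCoeff Ggf = 1 := by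
  have : PowerSeries.constantCoeff Ggf = PowerSeries.coeff 0 Ggf := by
    simp [PowerSeries.coeff_zero_eq_constantCoeff]
  rw [this]
  simp [Ggf, PowerSeries.coeff_mk, Nat.factorial]

lemma isUnit_Ggf : IsUnit Ggf := by
  rw [PowerSeries.isUnit_iff_constantCoeff, constantCoeff_Ggf]
  exact isUnit_one

lemma Ggf_mul_inv : Ggf * Ring.inverse Ggf = 1 :=
  Ring.mul_inverse_cancel _ isUnit_Ggf

/-- the (symmetrized) arrow-product coefficient sum -/
noncomputable def arrSum (x : ℕ → RW) (n : ℕ) : RW :=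
  ∑ k ∈ range (n+1), (n.choose k : ℚ) • (Wp ^ (k*(k-1) + k*(n-k)) * x (n-k))

lemma choose_two_add (k j : ℕ) : (k + j).choose 2 = k.choose 2 + j.choose 2 + k * j := by
  induction j with
  | zero => simp
  | succ j ih =>
    have h1 : (k + j + 1).choose 2 = (k + j).choose 2 + (k + j) := by
      rw [Nat.choose_succ_succ' (k+j) 1]
      simp [Nat.choose_one_right]; ring
    have h2 : (j + 1).choose 2 = j.choose 2 + j := by
      rw [Nat.choose_succ_succ' j 1]
      simp [Nat.choose_one_right]; ring
    have : k + (j+1) = (k + j) + 1 := by ring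
    rw [this, h1, ih, h2]
    ring

lemma two_mul_choose_two (k : ℕ) : k * (k - 1) = 2 * k.choose 2 := by
  cases k with
  | zero => simp
  | succ k =>
    rw [Nat.choose_two_right]
    simp only [Nat.add_sub_cancel]
    have h : 2 ∣ (k+1) * k := by
      rcases Nat.even_or_odd k with h | h
      · exact Dvd.dvd.mul_left h.two_dvd _
      · exact Dvd.dvd.mul_right (Odd.add_one h).two_dvd _
    rw [Nat.mul_div_cancel' h]

lemma exponent_eq {k n : ℕ} (hk : k ≤ n) :
    k*(k-1) + k*(n-k) + (n-k).choose 2 = k.choose 2 + n.choose 2 := by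
  have := choose_two_add k (n - k)
  rw [Nat.add_sub_cancel' hk] at this
  have h2 := two_mul_choose_two k
  omega

/-- Step A: the Hadamard quotient satisfies the arrow-convolution identity. -/
lemma stepA (n : ℕ) :
    arrSum (fun m => ncoeff m (ehad Ggf (Ring.inverse Ggf))) n = if n = 0 then 1 else 0 := by
  have key : (if n = 0 then (1:RW) else 0) =
      ∑ k ∈ range (n+1), (n.choose k : ℚ) •
        (Wp ^ k.choose 2 * ncoeff (n-k) (Ring.inverse Ggf)) := by
    have := ncoeff_mul Ggf (Ring.inverse Ggf) n
    rw [Ggf_mul_inv, ncoeff_one] at this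
    simpa [ncoeff_Ggf] using this
  have expand : arrSum (fun m => ncoeff m (ehad Ggf (Ring.inverse Ggf))) n =
      Wp ^ n.choose 2 * ∑ k ∈ range (n+1), (n.choose k : ℚ) •
        (Wp ^ k.choose 2 * ncoeff (n-k) (Ring.inverse Ggf)) := by
    rw [arrSum, Finset.mul_sum]
    refine Finset.sum_congr rfl fun k hk => ?_
    have hkn : k ≤ n := Nat.lt_succ_iff.mp (mem_range.mp hk)
    rw [ncoeff_ehad, ncoeff_Ggf, mul_smul_comm]
    congr 1
    rw [← mul_assoc, ← pow_add, ← mul_assoc, ← pow_add]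
    congr 2
    have := exponent_eq hkn
    omega
  rw [expand, ← key]
  split
  · next h => subst h; simp [Nat.choose]
  · simp

/-- Uniqueness: the arrow-convolution identity determines the sequence. -/
lemma arr_unique {x y : ℕ → RW}
    (hx : ∀ n, arrSum x n = if n = 0 then 1 else 0)
    (hy : ∀ n, arrSum y n = if n = 0 then 1 else 0) : ∀ n, x n = y n := by
  intro n
  induction n using Nat.strong_induction_on with
  | _ n ih =>
    have peel : ∀ z : ℕ → RW, arrSum z n =
        (∑ i ∈ range n, ((n.choose (i+1) : ℚ)) •
          (Wp ^ ((i+1)*i + (i+1)*(n-(i+1))) * z (n-(i+1)))) + z n := by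
      intro z
      rw [arrSum, Finset.sum_range_succ']
      simp
    have hxn := hx n; have hyn := hy n
    rw [peel] at hxn hyn
    have hsum : (∑ i ∈ range n, ((n.choose (i+1) : ℚ)) •
          (Wp ^ ((i+1)*i + (i+1)*(n-(i+1))) * x (n-(i+1)))) =
        (∑ i ∈ range n, ((n.choose (i+1) : ℚ)) •
          (Wp ^ ((i+1)*i + (i+1)*(n-(i+1))) * y (n-(i+1)))) := by
      refine Finset.sum_congr rfl fun i hi => ?_
      have : n - (i+1) < n := by
        have := mem_range.mp hi; omega
      rw [ih _ this]
    have : x n = y n := by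
      have := hxn.trans hyn.symm
      rw [hsum] at this
      exact add_left_cancel this
    exact this

noncomputable def expP (A : PowerSeries RW) (m : ℕ) : PowerSeries RW :=
  ∑ k ∈ Finset.range (m + 1), ((k.factorial : ℚ)⁻¹) • A ^ k

lemma coeff_pow_zero_of_lt {A : PowerSeries RW} (hA : PowerSeries.constantCoeff A = 0)
    {m k : ℕ} (h : m < k) : PowerSeries.coeff m (A ^ k) = 0 := by
  obtain ⟨B, rfl⟩ := PowerSeries.X_dvd_iff.mpr hA
  rw [mul_pow]
  exact (PowerSeries.X_pow_dvd_iff.mp (dvd_mul_right _ _)) m h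

lemma coeff_expP {A : PowerSeries RW} (hA : PowerSeries.constantCoeff A = 0)
    {i n : ℕ} (hi : i ≤ n) :
    PowerSeries.coeff i (expP A n) = PowerSeries.coeff i (expSeries A) := by
  have key : ∀ m : ℕ, i ≤ m → PowerSeries.coeff i (expP A m) =
      PowerSeries.coeff i (expP A i) := by
    intro m him
    rw [expP, expP, map_sum, map_sum]
    refine (Finset.sum_subset (Finset.range_subset_range.mpr (by omega)) ?_).symm
    intro k hk hk'
    have : i < k := by simp only [mem_range] at hk hk'; omega
    rw [PowerSeries.coeff_smul, coeff_pow_zero_of_lt hA this, smul_zero]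
  rw [key n hi, expSeries, PowerSeries.coeff_mk, ← expP, key i le_rfl]

lemma coeff_derivativeFun' (f : PowerSeries RW) (n : ℕ) :
    PowerSeries.coeff n f.derivativeFun = PowerSeries.coeff (n+1) f * (n+1) :=
  PowerSeries.coeff_derivative f n

lemma derivativeFun_zero' : PowerSeries.derivativeFun (0 : PowerSeries RW) = 0 := by
  have : PowerSeries.derivativeFun (PowerSeries.C (0 : RW)) = 0 := PowerSeries.derivativeFun_C (r := (0 : RW))
  simpa using this

lemma derivativeFun_sum {s : Finset ℕ} {f : ℕ → PowerSeries RW} :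
    PowerSeries.derivativeFun (∑ k ∈ s, f k) = ∑ k ∈ s, PowerSeries.derivativeFun (f k) := by
  induction s using Finset.cons_induction with
  | empty => simpa using derivativeFun_zero'
  | cons a s ha ih => rw [Finset.sum_cons, Finset.sum_cons, PowerSeries.derivativeFun_add, ih]

lemma derivativeFun_qsmul (q : ℚ) (f : PowerSeries RW) :
    PowerSeries.derivativeFun (q • f) = q • PowerSeries.derivativeFun f := by
  ext n : 1
  simp only [coeff_derivativeFun', PowerSeries.coeff_smul, smul_mul_assoc]

lemma derivativeFun_pow (A : PowerSeries RW) (k : ℕ) :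
    PowerSeries.derivativeFun (A ^ (k+1)) =
      (k+1) • ((A ^ k) * PowerSeries.derivativeFun A) := by
  induction k with
  | zero => simp [PowerSeries.derivativeFun_mul, PowerSeries.derivativeFun_one]
  | succ k ih =>
    rw [pow_succ (n := k+1), PowerSeries.derivativeFun_mul, ih, smul_eq_mul, smul_eq_mul]
    ring

lemma derivP (A : PowerSeries RW) (n : ℕ) :
    PowerSeries.derivativeFun (expP A (n+1)) = expP A n * PowerSeries.derivativeFun A := by
  rw [expP, derivativeFun_sum, Finset.sum_range_succ']
  have h0 : ((Nat.factorial 0 : ℚ)⁻¹) • PowerSeries.derivativeFun ((A : PowerSeries RW) ^ 0) = 0 := by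
    simp [PowerSeries.derivativeFun_one]
  have h2 : ((Nat.factorial 0 : ℚ)⁻¹ • (A:PowerSeries RW) ^ 0).derivativeFun = 0 := by
    rw [derivativeFun_qsmul]
    simp [PowerSeries.derivativeFun_one]
  rw [h2, add_zero, expP, Finset.sum_mul]
  refine Finset.sum_congr rfl fun k hk => ?_
  rw [derivativeFun_qsmul, derivativeFun_pow, smul_mul_assoc]
  rw [← Nat.cast_smul_eq_nsmul ℚ (k+1), smul_smul]
  congr 1
  rw [Nat.factorial_succ]
  push_cast
  have hk1 : ((k:ℚ)+1) ≠ 0 := by positivity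
  have hk2 : ((k.factorial :ℚ)) ≠ 0 := by exact_mod_cast k.factorial_ne_zero
  field_simp

lemma expRec {A : PowerSeries RW} (hA : PowerSeries.constantCoeff A = 0) (n : ℕ) :
    ncoeff (n+1) (expSeries A) = ∑ j ∈ range (n+1),
      (n.choose j : ℚ) • (ncoeff (j+1) A * ncoeff (n-j) (expSeries A)) := by
  have hmul : ∀ (m : ℕ) (x : RW), x * ((m : ℕ) : RW) = ((m : ℕ) : ℚ) • x := by
    intro m x
    rw [← nsmul_eq_mul', Nat.cast_smul_eq_nsmul]
  have h1 : PowerSeries.coeff n ((expP A (n+1)).derivativeFun) =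
      PowerSeries.coeff (n+1) (expSeries A) * (((n+1 : ℕ)) : RW) := by
    rw [coeff_derivativeFun']
    congr 1
    · rw [expSeries, PowerSeries.coeff_mk, expP]
    · push_cast; ring
  have h2 : PowerSeries.coeff n (expP A n * A.derivativeFun) =
      ∑ j ∈ range (n+1), PowerSeries.coeff j (expSeries A) *
        (PowerSeries.coeff (n-j+1) A * (((n-j+1 : ℕ)) : RW)) := by
    rw [PowerSeries.coeff_mul, Finset.Nat.sum_antidiagonal_eq_sum_range_succ_mk]
    refine Finset.sum_congr rfl fun j hj => ?_
    have hjn : j ≤ n := Nat.lt_succ_iff.mp (mem_range.mp hj)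
    rw [coeff_expP hA hjn, coeff_derivativeFun']
    push_cast; ring
  have h3 : PowerSeries.coeff (n+1) (expSeries A) * (((n+1 : ℕ)) : RW) =
      ∑ j ∈ range (n+1), PowerSeries.coeff (n-j) (expSeries A) *
        (PowerSeries.coeff (j+1) A * (((j+1 : ℕ)) : RW)) := by
    rw [← h1, derivP, h2, ← Finset.sum_range_reflect]
    refine Finset.sum_congr rfl fun j hj => ?_
    have hjn : j < n + 1 := mem_range.mp hj
    have e1 : n + 1 - 1 - j = n - j := by omega
    have e2 : n - (n - j) = j := by omega
    rw [e1, e2]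
  have h4 := congrArg (fun x : RW => (n.factorial : ℚ) • x) h3
  calc ncoeff (n+1) (expSeries A)
      = (n.factorial : ℚ) • (PowerSeries.coeff (n+1) (expSeries A) * (((n+1 : ℕ)) : RW)) := by
        rw [ncoeff, hmul, smul_smul]
        congr 1
        rw [Nat.factorial_succ]
        push_cast; ring
    _ = (n.factorial : ℚ) • ∑ j ∈ range (n+1), PowerSeries.coeff (n-j) (expSeries A) *
        (PowerSeries.coeff (j+1) A * (((j+1 : ℕ)) : RW)) := h4
    _ = ∑ j ∈ range (n+1), (n.choose j : ℚ) • (ncoeff (j+1) A * ncoeff (n-j) (expSeries A)) := by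
        rw [Finset.smul_sum]
        refine Finset.sum_congr rfl fun j hj => ?_
        have hjn : j ≤ n := Nat.lt_succ_iff.mp (mem_range.mp hj)
        rw [hmul, ncoeff, ncoeff, mul_smul_comm, smul_mul_assoc, mul_smul_comm,
          smul_smul, smul_smul, smul_smul]
        rw [mul_comm (PowerSeries.coeff (n-j) (expSeries A))]
        congr 1
        rw [← Nat.choose_mul_factorial_mul_factorial hjn, Nat.factorial_succ]
        push_cast; ring

lemma ncoeff_expSeries_zero (A : PowerSeries RW) : ncoeff 0 (expSeries A) = 1 := by
  simp [ncoeff, expSeries, PowerSeries.coeff_mk]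

/-! ### Combinatorial part -/

open Relation
set_option linter.unusedSectionVars false
set_option linter.unusedVariables false

section Digraphs
variable {α : Type*} {β : Type*} [DecidableEq α] [DecidableEq β]

def ReachIn (T : Finset α) (D : Finset (α × α)) (u v : α) : Prop :=
  Relation.ReflTransGen (fun a b => (a, b) ∈ D ∧ a ∈ T ∧ b ∈ T) u v

lemma ReachIn.refl {T : Finset α} {D} {u : α} : ReachIn T D u u := ReflTransGen.refl

lemma ReachIn.trans {T : Finset α} {D} {u v w : α} (h1 : ReachIn T D u v)
    (h2 : ReachIn T D v w) : ReachIn T D u w := ReflTransGen.trans h1 h2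

lemma ReachIn.single {T : Finset α} {D} {u v : α} (h : (u,v) ∈ D) (hu : u ∈ T) (hv : v ∈ T) :
    ReachIn T D u v := ReflTransGen.single ⟨h, hu, hv⟩

lemma reachIn_mono {T T' : Finset α} {D D' : Finset (α × α)} (hT : T ⊆ T') (hD : D ⊆ D')
    {u v : α} (h : ReachIn T D u v) : ReachIn T' D' u v :=
  ReflTransGen.mono (p := fun a b => (a, b) ∈ D' ∧ a ∈ T' ∧ b ∈ T') (by intro a b hab; exact ⟨hD hab.1, hT hab.2.1, hT hab.2.2⟩) _ _ h

lemma reachIn_cases {T : Finset α} {D} {u v : α} (h : ReachIn T D u v) :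
    u = v ∨ (u ∈ T ∧ v ∈ T) := by
  induction h with
  | refl => exact Or.inl rfl
  | tail h' step ih =>
    rcases ih with rfl | ⟨h1, h2⟩
    · exact Or.inr ⟨step.2.1, step.2.2⟩
    · exact Or.inr ⟨h1, step.2.2⟩

/-- confinement of a path to a closed subset containing its start -/
lemma reachIn_confine {T S : Finset α} {D : Finset (α × α)}
    (hS : ∀ p ∈ D, p.1 ∈ T → p.2 ∈ T → p.1 ∈ S → p.2 ∈ S)
    {u v : α} (h : ReachIn T D u v) (hu : u ∈ S) : ReachIn S D u v ∧ v ∈ S := by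
  induction h with
  | refl => exact ⟨ReachIn.refl, hu⟩
  | tail h' step ih =>
    have hb := hS _ step.1 step.2.1 step.2.2 ih.2
    exact ⟨ih.1.tail ⟨step.1, ih.2, hb⟩, hb⟩

/-- arcs with both endpoints in `T` can be replaced by a sub-digraph -/
lemma reachIn_subarcs {T : Finset α} {D D' : Finset (α × α)} (hD : D' ⊆ D)
    (h' : ∀ p ∈ D, p.1 ∈ T → p.2 ∈ T → p ∈ D') {u v : α} :
    ReachIn T D' u v ↔ ReachIn T D u v := by
  constructor
  · exact reachIn_mono (le_refl T) hD
  · exact ReflTransGen.mono (p := fun a b => (a, b) ∈ D' ∧ a ∈ T ∧ b ∈ T) (by intro a b hab; exact ⟨h' _ hab.1 hab.2.1 hab.2.2, hab.2.1, hab.2.2⟩) _ _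

def arcsOn (T : Finset α) : Finset (α × α) := (T ×ˢ T).filter fun p => p.1 ≠ p.2

lemma mem_arcsOn {T : Finset α} {p : α × α} :
    p ∈ arcsOn T ↔ p.1 ∈ T ∧ p.2 ∈ T ∧ p.1 ≠ p.2 := by
  simp [arcsOn, mem_filter, mem_product, and_assoc]

lemma card_arcsOn (T : Finset α) : (arcsOn T).card = T.card * (T.card - 1) := by
  have hsplit : arcsOn T = (T ×ˢ T) \ (T.image fun a => (a,a)) := by
    ext p
    simp only [mem_arcsOn, mem_sdiff, mem_product, mem_image]
    constructor
    · rintro ⟨h1, h2, h3⟩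
      exact ⟨⟨h1, h2⟩, by rintro ⟨a, _, rfl⟩; exact h3 rfl⟩
    · rintro ⟨⟨h1, h2⟩, h3⟩
      exact ⟨h1, h2, fun he => h3 ⟨p.1, h1, Prod.ext rfl he⟩⟩
  have hsub : (T.image fun a => (a,a)) ⊆ T ×ˢ T := by
    intro p hp
    obtain ⟨a, ha, rfl⟩ := mem_image.mp hp
    exact mem_product.mpr ⟨ha, ha⟩
  have hinj : (T.image fun a : α => (a,a)).card = T.card :=
    card_image_of_injective _ (fun a b h => congrArg Prod.fst h)
  rw [hsplit, card_sdiff_of_subset hsub, hinj, card_product, Nat.mul_sub_one]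

def AllStrong (T : Finset α) (D : Finset (α × α)) : Prop :=
  ∀ u v, ReachIn T D u v → ReachIn T D v u

def StrongOn (T : Finset α) (D : Finset (α × α)) : Prop :=
  ∀ u ∈ T, ∀ v ∈ T, ReachIn T D u v

noncomputable def compOf (T : Finset α) (D : Finset (α × α)) (v : α) : Finset α :=
  T.filter fun u => ReachIn T D v u ∧ ReachIn T D u v

lemma mem_compOf {T : Finset α} {D} {v u : α} :
    u ∈ compOf T D v ↔ u ∈ T ∧ ReachIn T D v u ∧ ReachIn T D u v := by
  simp [compOf, mem_filter]

lemma self_mem_compOf {T : Finset α} {D} {v : α} (hv : v ∈ T) : v ∈ compOf T D v :=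
  mem_compOf.mpr ⟨hv, ReachIn.refl, ReachIn.refl⟩

lemma compOf_subset {T : Finset α} {D} {v : α} : compOf T D v ⊆ T := filter_subset _ _

lemma compOf_eq_of_mem {T : Finset α} {D} {v u : α} (h : u ∈ compOf T D v) :
    compOf T D u = compOf T D v := by
  rcases mem_compOf.mp h with ⟨hu, hvu, huv⟩
  ext x
  simp only [mem_compOf]
  constructor
  · rintro ⟨hx, h1, h2⟩; exact ⟨hx, hvu.trans h1, h2.trans huv⟩
  · rintro ⟨hx, h1, h2⟩; exact ⟨hx, huv.trans h1, h2.trans hvu⟩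

noncomputable def ncomps (T : Finset α) (D : Finset (α × α)) : ℕ := (T.image (compOf T D)).card

noncomputable def AStSet (T : Finset α) : Finset (Finset (α × α)) :=
  (arcsOn T).powerset.filter (AllStrong T)

noncomputable def EpolyOn (T : Finset α) : RW :=
  ∑ D ∈ AStSet T, (-1 : RW) ^ (ncomps T D) * (PowerSeries.X : RW) ^ D.card

noncomputable def SCSet (T : Finset α) : Finset (Finset (α × α)) :=
  (arcsOn T).powerset.filter (StrongOn T)

noncomputable def SpolyOn (T : Finset α) : RW :=
  ∑ D ∈ SCSet T, (PowerSeries.X : RW) ^ D.card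

/-! ### Transport along embeddings -/

lemma reach_map_iff (f : α ↪ β) (T : Finset α) (D : Finset (α × α)) (u v : α) :
    ReachIn (T.map f) (D.map (f.prodMap f)) (f u) (f v) ↔ ReachIn T D u v := by
  constructor
  · intro h
    have key : ∀ y' : β, ReachIn (T.map f) (D.map (f.prodMap f)) (f u) y' →
        ∀ y, f y = y' → ReachIn T D u y := by
      intro y' h'
      induction h' with
      | refl =>
        intro y hy
        cases f.injective hy
        exact ReachIn.refl
      | tail h'' step ih =>
        intro y hy
        obtain ⟨q, hq, hfq⟩ := Finset.mem_map.mp step.1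
        obtain ⟨b0, hb0, hfb0⟩ := Finset.mem_map.mp step.2.1
        have hq1 : f q.1 = _ := congrArg Prod.fst hfq
        have hq2 : f q.2 = _ := congrArg Prod.snd hfq
        have hq1' : q.1 = b0 := f.injective (by rw [hq1, ← hfb0])
        have hq2' : q.2 = y := f.injective (by rw [hq2, ← hy])
        have hyT : y ∈ T := by
          obtain ⟨c0, hc0, hfc0⟩ := Finset.mem_map.mp step.2.2
          rwa [f.injective (hfc0.trans hy.symm)] at hc0
        refine (ih b0 hfb0).tail ⟨?_, hb0, hyT⟩
        have hqe : q = (b0, y) := Prod.ext hq1' hq2'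
        rwa [hqe] at hq
    exact key _ h _ rfl
  · intro h
    unfold ReachIn at h ⊢
    refine ReflTransGen.lift (p := fun a b => (a, b) ∈ D.map (f.prodMap f) ∧ a ∈ T.map f ∧ b ∈ T.map f) f ?_ _ _ h
    intro a b hab
    refine ⟨?_, Finset.mem_map_of_mem f hab.2.1, Finset.mem_map_of_mem f hab.2.2⟩
    have := Finset.mem_map_of_mem (f.prodMap f) hab.1
    simpa using this

lemma compOf_map (f : α ↪ β) (T : Finset α) (D : Finset (α × α)) (v : α) :
    compOf (T.map f) (D.map (f.prodMap f)) (f v) = (compOf T D v).map f := by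
  ext b
  simp only [mem_compOf, Finset.mem_map]
  constructor
  · rintro ⟨⟨u, hu, rfl⟩, h1, h2⟩
    exact ⟨u, ⟨hu, (reach_map_iff f T D v u).mp h1,
      (reach_map_iff f T D u v).mp h2⟩, rfl⟩
  · rintro ⟨u, ⟨hu1, h1, h2⟩, rfl⟩
    exact ⟨⟨u, hu1, rfl⟩, (reach_map_iff f T D v u).mpr h1, (reach_map_iff f T D u v).mpr h2⟩

lemma ncomps_map (f : α ↪ β) (T : Finset α) (D : Finset (α × α)) :
    ncomps (T.map f) (D.map (f.prodMap f)) = ncomps T D := by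
  unfold ncomps
  have : (T.map f).image (compOf (T.map f) (D.map (f.prodMap f))) =
      (T.image (compOf T D)).image (fun s => s.map f) := by
    ext s
    simp only [mem_image, Finset.mem_map]
    constructor
    · rintro ⟨x, ⟨u, hu, rfl⟩, rfl⟩
      exact ⟨compOf T D u, ⟨u, hu, rfl⟩, (compOf_map f T D u).symm⟩
    · rintro ⟨s0, ⟨u, hu, rfl⟩, rfl⟩
      exact ⟨f u, ⟨u, hu, rfl⟩, compOf_map f T D u⟩
  rw [this, Finset.card_image_of_injective _ (Finset.map_injective f)]

lemma arcsOn_map (f : α ↪ β) (T : Finset α) :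
    arcsOn (T.map f) = (arcsOn T).map (f.prodMap f) := by
  ext p
  simp only [mem_arcsOn, Finset.mem_map, Function.Embedding.prodMap]
  constructor
  · rintro ⟨⟨a, ha, ha'⟩, ⟨b, hb, hb'⟩, hne⟩
    refine ⟨(a, b), ⟨ha, hb, fun h => hne (ha'.symm.trans ((congrArg f h).trans hb'))⟩, ?_⟩
    simpa using Prod.ext ha' hb'
  · rintro ⟨⟨a, b⟩, ⟨ha, hb, hne⟩, rfl⟩
    exact ⟨⟨a, ha, rfl⟩, ⟨b, hb, rfl⟩, by simpa using fun h => hne (f.injective h)⟩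

lemma AStSet_map (f : α ↪ β) (T : Finset α) :
    AStSet (T.map f) = (AStSet T).image (fun D => D.map (f.prodMap f)) := by
  ext D'
  simp only [AStSet, mem_filter, Finset.mem_powerset, Finset.mem_image]
  constructor
  · rintro ⟨hsub, hAS⟩
    rw [arcsOn_map] at hsub
    obtain ⟨D, hD, rfl⟩ := Finset.subset_map_iff.mp hsub
    refine ⟨D, ⟨⟨hD, ?_⟩, rfl⟩⟩
    intro u v h
    have := hAS (f u) (f v) ((reach_map_iff f T D u v).mpr h)
    exact (reach_map_iff f T D v u).mp this
  · rintro ⟨D, ⟨⟨hD, hAS⟩, rfl⟩⟩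
    refine ⟨by rw [arcsOn_map]; exact Finset.map_subset_map.mpr hD, ?_⟩
    intro u v h
    rcases reachIn_cases h with rfl | ⟨hu, hv⟩
    · exact ReachIn.refl
    · obtain ⟨a, ha, rfl⟩ := Finset.mem_map.mp hu
      obtain ⟨b, hb, rfl⟩ := Finset.mem_map.mp hv
      exact (reach_map_iff f T D b a).mpr (hAS a b ((reach_map_iff f T D a b).mp h))

lemma SCSet_map (f : α ↪ β) (T : Finset α) :
    SCSet (T.map f) = (SCSet T).image (fun D => D.map (f.prodMap f)) := by
  ext D'
  simp only [SCSet, mem_filter, Finset.mem_powerset, Finset.mem_image]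
  constructor
  · rintro ⟨hsub, hS⟩
    rw [arcsOn_map] at hsub
    obtain ⟨D, hD, rfl⟩ := Finset.subset_map_iff.mp hsub
    refine ⟨D, ⟨⟨hD, ?_⟩, rfl⟩⟩
    intro u hu v hv
    exact (reach_map_iff f T D u v).mp
      (hS _ (Finset.mem_map_of_mem f hu) _ (Finset.mem_map_of_mem f hv))
  · rintro ⟨D, ⟨⟨hD, hS⟩, rfl⟩⟩
    refine ⟨by rw [arcsOn_map]; exact Finset.map_subset_map.mpr hD, ?_⟩
    intro u hu v hv
    obtain ⟨a, ha, rfl⟩ := Finset.mem_map.mp hu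
    obtain ⟨b, hb, rfl⟩ := Finset.mem_map.mp hv
    exact (reach_map_iff f T D a b).mpr (hS a ha b hb)

lemma EpolyOn_map (f : α ↪ β) (T : Finset α) : EpolyOn (T.map f) = EpolyOn T := by
  rw [EpolyOn, EpolyOn, AStSet_map,
    Finset.sum_image (fun D hD D' hD' h => by
      exact Finset.map_injective (f.prodMap f) h)]
  refine Finset.sum_congr rfl fun D hD => ?_
  rw [Finset.card_map]
  congr 1
  have hsub : D ⊆ arcsOn T := Finset.mem_powerset.mp (Finset.mem_filter.mp hD).1
  rw [ncomps_map]

lemma SpolyOn_map (f : α ↪ β) (T : Finset α) : SpolyOn (T.map f) = SpolyOn T := by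
  rw [SpolyOn, SpolyOn, SCSet_map,
    Finset.sum_image (fun D hD D' hD' h => Finset.map_injective (f.prodMap f) h)]
  exact Finset.sum_congr rfl fun D hD => by rw [Finset.card_map]

end Digraphs

section Decomp
variable {α : Type*} [DecidableEq α]

lemma comp_arc_closed {T : Finset α} {D : Finset (α × α)} (hAS : AllStrong T D) {v : α}
    {p : α × α} (hp : p ∈ D) (h1 : p.1 ∈ T) (h2 : p.2 ∈ T)
    (hin : p.1 ∈ compOf T D v) : p.2 ∈ compOf T D v := by
  rcases mem_compOf.mp hin with ⟨hT, hv1, h1v⟩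
  have harc : ReachIn T D p.1 p.2 := ReachIn.single hp h1 h2
  have hback : ReachIn T D p.2 p.1 := hAS _ _ harc
  exact mem_compOf.mpr ⟨h2, hv1.trans harc, hback.trans h1v⟩

lemma comp_arc_closed' {T : Finset α} {D : Finset (α × α)} (hAS : AllStrong T D) {v : α}
    {p : α × α} (hp : p ∈ D) (h1 : p.1 ∈ T) (h2 : p.2 ∈ T)
    (hin : p.2 ∈ compOf T D v) : p.1 ∈ compOf T D v := by
  rcases mem_compOf.mp hin with ⟨hT, hv2, h2v⟩
  have harc : ReachIn T D p.1 p.2 := ReachIn.single hp h1 h2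
  have hback : ReachIn T D p.2 p.1 := hAS _ _ harc
  exact mem_compOf.mpr ⟨h1, hv2.trans hback, harc.trans h2v⟩

lemma mem_compOf_symm {T : Finset α} {D : Finset (α × α)} {u v : α}
    (h : u ∈ compOf T D v) (hv : v ∈ T) : v ∈ compOf T D u := by
  rcases mem_compOf.mp h with ⟨hu, h1, h2⟩
  exact mem_compOf.mpr ⟨hv, h2, h1⟩

/-- the `D`-part of an all-strong digraph whose source lies in the component `K` of `v` -/
lemma decomp_forward {T : Finset α} {D : Finset (α × α)} (hD : D ⊆ arcsOn T)
    (hAS : AllStrong T D) (v : α) (hv : v ∈ T) :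
    let K := compOf T D v
    (D.filter (fun p => p.1 ∈ K) ⊆ arcsOn K) ∧
    StrongOn K (D.filter (fun p => p.1 ∈ K)) ∧
    (D.filter (fun p => ¬ p.1 ∈ K) ⊆ arcsOn (T \ K)) ∧
    AllStrong (T \ K) (D.filter (fun p => ¬ p.1 ∈ K)) := by
  intro K
  have harc : ∀ p ∈ D, p.1 ∈ T ∧ p.2 ∈ T ∧ p.1 ≠ p.2 := fun p hp => mem_arcsOn.mp (hD hp)
  have hKcl : ∀ p ∈ D, p.1 ∈ T → p.2 ∈ T → p.1 ∈ K → p.2 ∈ K := by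
    intro p hp h1 h2 h3; exact comp_arc_closed hAS hp h1 h2 h3
  have hKcl' : ∀ p ∈ D, p.1 ∈ T → p.2 ∈ T → p.1 ∈ T \ K → p.2 ∈ T \ K := by
    intro p hp h1 h2 h3
    rcases mem_sdiff.mp h3 with ⟨-, hnk⟩
    refine mem_sdiff.mpr ⟨h2, fun hk => hnk ?_⟩
    exact comp_arc_closed' hAS hp h1 h2 hk
  have hsub1 : D.filter (fun p => p.1 ∈ K) ⊆ arcsOn K := by
    intro p hp
    rcases mem_filter.mp hp with ⟨hpD, hp1⟩
    rcases harc p hpD with ⟨h1, h2, h3⟩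
    exact mem_arcsOn.mpr ⟨hp1, hKcl p hpD h1 h2 hp1, h3⟩
  have hreach1 : ∀ u ∈ K, ∀ x, ReachIn T D u x → x ∈ K → ReachIn K (D.filter (fun p => p.1 ∈ K)) u x := by
    intro u hu x hx hxK
    have hconf := reachIn_confine hKcl hx hu
    exact (reachIn_subarcs (Finset.filter_subset _ D)
      (fun p hp h1 h2 => Finset.mem_filter.mpr ⟨hp, h1⟩)).mpr hconf.1
  refine ⟨hsub1, ?_, ?_, ?_⟩
  · -- StrongOn K
    intro u hu w hw
    rcases mem_compOf.mp hu with ⟨huT, hvu, huv⟩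
    rcases mem_compOf.mp hw with ⟨hwT, hvw, hwv⟩
    exact hreach1 u hu w (huv.trans hvw) hw
  · -- rest ⊆ arcsOn (T \ K)
    intro p hp
    rcases mem_filter.mp hp with ⟨hpD, hp1⟩
    rcases harc p hpD with ⟨h1, h2, h3⟩
    have h1' : p.1 ∈ T \ K := mem_sdiff.mpr ⟨h1, hp1⟩
    exact mem_arcsOn.mpr ⟨h1', hKcl' p hpD h1 h2 h1', h3⟩
  · -- AllStrong rest
    intro u w h
    rcases reachIn_cases h with rfl | ⟨hu, hw⟩
    · exact ReachIn.refl
    have hTD : ReachIn T D u w :=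
      reachIn_mono (Finset.sdiff_subset) (Finset.filter_subset _ D) h
    have hback : ReachIn T D w u := hAS _ _ hTD
    have hconf := reachIn_confine hKcl' hback hw
    exact (reachIn_subarcs (Finset.filter_subset _ D)
      (fun p hp h1 h2 => Finset.mem_filter.mpr ⟨hp, (mem_sdiff.mp h1).2⟩)).mpr hconf.1

lemma compOf_eq_self_of_mem_comp {T : Finset α} {D : Finset (α × α)} {v u : α}
    (hu : u ∈ compOf T D v) : compOf T D u = compOf T D v := compOf_eq_of_mem hu

end Decomp

section Ncomps
variable {α : Type*} [DecidableEq α]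

lemma ncomps_insert {T K : Finset α} (hK : K ⊆ T) (hKne : K.Nonempty)
    {D Dc : Finset (α × α)}
    (hcompK : ∀ u ∈ K, compOf T D u = K)
    (hcomp_rest : ∀ u ∈ T \ K, compOf T D u = compOf (T \ K) Dc u) :
    ncomps T D = ncomps (T \ K) Dc + 1 := by
  have himg : T.image (compOf T D) =
      insert K ((T \ K).image (compOf (T \ K) Dc)) := by
    have hTu : K ∪ (T \ K) = T := Finset.union_sdiff_of_subset hK
    have hsplit : T.image (compOf T D) =
        K.image (compOf T D) ∪ (T \ K).image (compOf T D) := by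
      rw [← Finset.image_union, hTu]
    rw [hsplit]
    have h1 : K.image (compOf T D) = {K} := by
      have : K.image (compOf T D) = K.image (fun _ => K) :=
        Finset.image_congr (fun u hu => hcompK u hu)
      rw [this, Finset.image_const hKne]
    have h2 : (T \ K).image (compOf T D) = (T \ K).image (compOf (T \ K) Dc) :=
      Finset.image_congr (fun u hu => hcomp_rest u hu)
    rw [h1, h2]
    ext y
    simp [Finset.mem_union, Finset.mem_insert]
  have hnot : K ∉ (T \ K).image (compOf (T \ K) Dc) := by
    intro h
    obtain ⟨u, hu, heq⟩ := Finset.mem_image.mp h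
    have : u ∈ compOf (T \ K) Dc u := self_mem_compOf hu
    rw [heq] at this
    exact (Finset.mem_sdiff.mp hu).2 this
  rw [ncomps, himg, Finset.card_insert_of_notMem hnot, ncomps]

/-- forward splitting: component bookkeeping -/
lemma ncomps_split {T : Finset α} {D : Finset (α × α)} (hD : D ⊆ arcsOn T)
    (hAS : AllStrong T D) {v : α} (hv : v ∈ T) :
    ncomps T D = ncomps (T \ compOf T D v) (D.filter (fun p => ¬ p.1 ∈ compOf T D v)) + 1 := by
  set K := compOf T D v with hKdef
  have hKT : K ⊆ T := compOf_subset
  have hKne : K.Nonempty := ⟨v, self_mem_compOf hv⟩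
  have harc : ∀ p ∈ D, p.1 ∈ T ∧ p.2 ∈ T ∧ p.1 ≠ p.2 := fun p hp => mem_arcsOn.mp (hD hp)
  have hKcl' : ∀ p ∈ D, p.1 ∈ T → p.2 ∈ T → p.1 ∈ T \ K → p.2 ∈ T \ K := by
    intro p hp h1 h2 h3
    rcases Finset.mem_sdiff.mp h3 with ⟨-, hnk⟩
    exact Finset.mem_sdiff.mpr ⟨h2, fun hk => hnk (comp_arc_closed' hAS hp h1 h2 hk)⟩
  refine ncomps_insert hKT hKne ?_ ?_
  · intro u hu
    exact compOf_eq_of_mem hu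
  · intro u hu
    ext x
    simp only [mem_compOf]
    constructor
    · rintro ⟨hxT, h1, h2⟩
      have hxK : x ∉ K := by
        intro hxk
        have hux : u ∈ compOf T D x := mem_compOf_symm (mem_compOf.mpr ⟨hxT, h1, h2⟩)
          (Finset.mem_sdiff.mp hu).1
        rw [compOf_eq_of_mem hxk] at hux
        exact (Finset.mem_sdiff.mp hu).2 hux
      have hx' : x ∈ T \ K := Finset.mem_sdiff.mpr ⟨hxT, hxK⟩
      have c1 := reachIn_confine hKcl' h1 hu
      have c2 := reachIn_confine hKcl' h2 hx'
      refine ⟨hx', (reachIn_subarcs (T := T \ K)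
        (Finset.filter_subset (fun p => ¬ p.1 ∈ K) D)
        (fun p hp h1' h2' => Finset.mem_filter.mpr ⟨hp, (Finset.mem_sdiff.mp h1').2⟩)).mpr c1.1,
        (reachIn_subarcs (T := T \ K)
        (Finset.filter_subset (fun p => ¬ p.1 ∈ K) D)
        (fun p hp h1' h2' => Finset.mem_filter.mpr ⟨hp, (Finset.mem_sdiff.mp h1').2⟩)).mpr c2.1⟩
    · rintro ⟨hxT, h1, h2⟩
      exact ⟨(Finset.mem_sdiff.mp hxT).1,
        reachIn_mono Finset.sdiff_subset (Finset.filter_subset _ D) h1,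
        reachIn_mono Finset.sdiff_subset (Finset.filter_subset _ D) h2⟩

/-- glueing: a strong digraph on `K` and an all-strong digraph on `T \ K` -/
lemma union_glue {T K : Finset α} (hK : K ⊆ T) {v : α} (hvK : v ∈ K)
    {DK Dc : Finset (α × α)} (hDK : DK ⊆ arcsOn K) (hSK : StrongOn K DK)
    (hDc : Dc ⊆ arcsOn (T \ K)) (hASc : AllStrong (T \ K) Dc) :
    (DK ∪ Dc ⊆ arcsOn T) ∧ AllStrong T (DK ∪ Dc) ∧ compOf T (DK ∪ Dc) v = K ∧
      ncomps T (DK ∪ Dc) = ncomps (T \ K) Dc + 1 := by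
  set D := DK ∪ Dc with hDdef
  have hsubT : D ⊆ arcsOn T := by
    intro p hp
    rcases Finset.mem_union.mp hp with h | h
    · rcases mem_arcsOn.mp (hDK h) with ⟨h1, h2, h3⟩
      exact mem_arcsOn.mpr ⟨hK h1, hK h2, h3⟩
    · rcases mem_arcsOn.mp (hDc h) with ⟨h1, h2, h3⟩
      exact mem_arcsOn.mpr ⟨(Finset.mem_sdiff.mp h1).1, (Finset.mem_sdiff.mp h2).1, h3⟩
  have hcl1 : ∀ p ∈ D, p.1 ∈ T → p.2 ∈ T → p.1 ∈ K → p.2 ∈ K := by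
    intro p hp _ _ h1
    rcases Finset.mem_union.mp hp with h | h
    · exact (mem_arcsOn.mp (hDK h)).2.1
    · exact absurd h1 (Finset.mem_sdiff.mp (mem_arcsOn.mp (hDc h)).1).2
  have hcl2 : ∀ p ∈ D, p.1 ∈ T → p.2 ∈ T → p.1 ∈ T \ K → p.2 ∈ T \ K := by
    intro p hp _ _ h1
    rcases Finset.mem_union.mp hp with h | h
    · exact absurd ((mem_arcsOn.mp (hDK h)).1) (fun hh => (Finset.mem_sdiff.mp h1).2 hh)
    · exact (mem_arcsOn.mp (hDc h)).2.1
  have reach_K : ∀ u ∈ K, ∀ x, ReachIn T D u x → x ∈ K ∧ ReachIn K DK u x := by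
    intro u hu x hx
    have c := reachIn_confine hcl1 hx hu
    refine ⟨c.2, (reachIn_subarcs (T := K)
      (Finset.subset_union_left (s₁ := DK) (s₂ := Dc))
      (fun p hp h1 h2 => by
        rcases Finset.mem_union.mp hp with h | h
        · exact h
        · exact absurd h1 (Finset.mem_sdiff.mp (mem_arcsOn.mp (hDc h)).1).2)).mpr c.1⟩
  have reach_C : ∀ u ∈ T \ K, ∀ x, ReachIn T D u x → x ∈ T \ K ∧ ReachIn (T \ K) Dc u x := by
    intro u hu x hx
    have c := reachIn_confine hcl2 hx hu
    refine ⟨c.2, (reachIn_subarcs (T := T \ K)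
      (Finset.subset_union_right (s₁ := DK) (s₂ := Dc))
      (fun p hp h1 h2 => by
        rcases Finset.mem_union.mp hp with h | h
        · exact absurd ((mem_arcsOn.mp (hDK h)).1) (fun hh => (Finset.mem_sdiff.mp h1).2 hh)
        · exact h)).mpr c.1⟩
  have hAS : AllStrong T D := by
    intro u x h
    rcases reachIn_cases h with rfl | ⟨hu, hx⟩
    · exact ReachIn.refl
    by_cases huK : u ∈ K
    · obtain ⟨hxK, hr⟩ := reach_K u huK x h
      exact reachIn_mono hK Finset.subset_union_left (hSK x hxK u huK)
    · have hu' : u ∈ T \ K := Finset.mem_sdiff.mpr ⟨hu, huK⟩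
      obtain ⟨hx', hr⟩ := reach_C u hu' x h
      exact reachIn_mono Finset.sdiff_subset Finset.subset_union_right (hASc _ _ hr)
  have hcomp : compOf T D v = K := by
    ext x
    simp only [mem_compOf]
    constructor
    · rintro ⟨hxT, h1, h2⟩
      exact (reach_K v hvK x h1).1
    · intro hx
      exact ⟨hK hx, reachIn_mono hK Finset.subset_union_left (hSK v hvK x hx),
        reachIn_mono hK Finset.subset_union_left (hSK x hx v hvK)⟩
  refine ⟨hsubT, hAS, hcomp, ?_⟩
  refine ncomps_insert hK ⟨v, hvK⟩ ?_ ?_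
  · intro u hu
    have : u ∈ compOf T D v := by rw [hcomp]; exact hu
    rw [compOf_eq_of_mem this, hcomp]
  · intro u hu
    ext x
    simp only [mem_compOf]
    constructor
    · rintro ⟨hxT, h1, h2⟩
      obtain ⟨hx', hr1⟩ := reach_C u hu x h1
      obtain ⟨-, hr2⟩ := reach_C x hx' u h2
      exact ⟨hx', hr1, hr2⟩
    · rintro ⟨hxT, h1, h2⟩
      exact ⟨(Finset.mem_sdiff.mp hxT).1,
        reachIn_mono Finset.sdiff_subset Finset.subset_union_right h1,
        reachIn_mono Finset.sdiff_subset Finset.subset_union_right h2⟩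

end Ncomps

section B1
variable {α : Type*} [DecidableEq α]

lemma mem_AStSet {T : Finset α} {D : Finset (α × α)} :
    D ∈ AStSet T ↔ D ⊆ arcsOn T ∧ AllStrong T D := by
  simp [AStSet, Finset.mem_filter, Finset.mem_powerset]

lemma mem_SCSet {T : Finset α} {D : Finset (α × α)} :
    D ∈ SCSet T ↔ D ⊆ arcsOn T ∧ StrongOn T D := by
  simp [SCSet, Finset.mem_filter, Finset.mem_powerset]

lemma Epoly_fiber {T : Finset α} {v : α} (hv : v ∈ T) {K : Finset α} (hKT : K ⊆ T)
    (hvK : v ∈ K) :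
    ∑ D ∈ (AStSet T).filter (fun D => compOf T D v = K),
        (-1 : RW) ^ (ncomps T D) * (PowerSeries.X : RW) ^ D.card
      = (-1) * (SpolyOn K * EpolyOn (T \ K)) := by
  have hRHS : (-1 : RW) * (SpolyOn K * EpolyOn (T \ K)) =
      ∑ q ∈ (SCSet K) ×ˢ (AStSet (T \ K)),
        (-1 : RW) * ((PowerSeries.X : RW) ^ q.1.card *
          ((-1:RW) ^ (ncomps (T \ K) q.2) * (PowerSeries.X : RW) ^ q.2.card)) := by
    rw [SpolyOn, EpolyOn, Finset.sum_mul_sum, Finset.mul_sum, Finset.sum_product]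
    simp_rw [Finset.mul_sum]
  rw [hRHS]
  refine Finset.sum_nbij'
    (i := fun D => (D.filter (fun p => p.1 ∈ K), D.filter (fun p => ¬ p.1 ∈ K)))
    (j := fun q => q.1 ∪ q.2) ?_ ?_ ?_ ?_ ?_
  · -- i maps into product
    intro D hD
    rcases Finset.mem_filter.mp hD with ⟨hDA, hcomp⟩
    rcases mem_AStSet.mp hDA with ⟨hsub, hAS⟩
    have hdf := decomp_forward hsub hAS v hv
    rw [hcomp] at hdf
    obtain ⟨h1, h2, h3, h4⟩ := hdf
    exact Finset.mem_product.mpr ⟨mem_SCSet.mpr ⟨h1, h2⟩, mem_AStSet.mpr ⟨h3, h4⟩⟩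
  · -- j maps into fiber
    intro q hq
    rcases Finset.mem_product.mp hq with ⟨hq1, hq2⟩
    rcases mem_SCSet.mp hq1 with ⟨hDK, hSK⟩
    rcases mem_AStSet.mp hq2 with ⟨hDc, hASc⟩
    obtain ⟨ha, hb, hc, hd⟩ := union_glue hKT hvK hDK hSK hDc hASc
    exact Finset.mem_filter.mpr ⟨mem_AStSet.mpr ⟨ha, hb⟩, hc⟩
  · -- left inverse
    intro D hD
    exact Finset.filter_union_filter_not_eq _ D
  · -- right inverse
    intro q hq
    rcases Finset.mem_product.mp hq with ⟨hq1, hq2⟩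
    rcases mem_SCSet.mp hq1 with ⟨hDK, -⟩
    rcases mem_AStSet.mp hq2 with ⟨hDc, -⟩
    have h1 : (q.1 ∪ q.2).filter (fun p => p.1 ∈ K) = q.1 := by
      ext p
      simp only [Finset.mem_filter, Finset.mem_union]
      constructor
      · rintro ⟨h | h, hpK⟩
        · exact h
        · exact absurd hpK (Finset.mem_sdiff.mp (mem_arcsOn.mp (hDc h)).1).2
      · intro h
        exact ⟨Or.inl h, (mem_arcsOn.mp (hDK h)).1⟩
    have h2 : (q.1 ∪ q.2).filter (fun p => ¬ p.1 ∈ K) = q.2 := by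
      ext p
      simp only [Finset.mem_filter, Finset.mem_union]
      constructor
      · rintro ⟨h | h, hpK⟩
        · exact absurd (mem_arcsOn.mp (hDK h)).1 hpK
        · exact h
      · intro h
        exact ⟨Or.inr h, (Finset.mem_sdiff.mp (mem_arcsOn.mp (hDc h)).1).2⟩
    exact Prod.ext h1 h2
  · -- values
    intro D hD
    rcases Finset.mem_filter.mp hD with ⟨hDA, hcomp⟩
    rcases mem_AStSet.mp hDA with ⟨hsub, hAS⟩
    have hns := ncomps_split hsub hAS hv
    rw [hcomp] at hns
    have hcard : (D.filter (fun p => p.1 ∈ K)).card + (D.filter (fun p => ¬ p.1 ∈ K)).card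
        = D.card := Finset.card_filter_add_card_filter_not _
    rw [hns, ← hcard]
    rw [pow_succ, pow_add]
    ring
  
lemma Epoly_decomp (T : Finset α) {v : α} (hv : v ∈ T) :
    EpolyOn T = ∑ K ∈ T.powerset.filter (fun K => v ∈ K),
      (-1 : RW) * (SpolyOn K * EpolyOn (T \ K)) := by
  rw [EpolyOn, ← Finset.sum_fiberwise_of_maps_to (g := fun D => compOf T D v)
    (t := T.powerset.filter (fun K => v ∈ K)) (fun D hD => ?_)]
  · refine Finset.sum_congr rfl fun K hK => ?_
    rcases Finset.mem_filter.mp hK with ⟨hKp, hvK⟩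
    exact Epoly_fiber hv (Finset.mem_powerset.mp hKp) hvK
  · rcases mem_AStSet.mp hD with ⟨hsub, hAS⟩
    exact Finset.mem_filter.mpr ⟨Finset.mem_powerset.mpr compOf_subset, self_mem_compOf hv⟩

end B1

section Sink
variable {α : Type*} [DecidableEq α] [Fintype α] [Nonempty α]

lemma exists_sink (D : Finset (α × α)) :
    ∃ K : Finset α, K.Nonempty ∧ (∀ p ∈ D, p.1 ∈ K → p.2 ∈ K) ∧
      (∀ u ∈ K, ∀ x ∈ K, ReachIn univ D u x) := by
  classical
  obtain ⟨v₀, -, hmin⟩ := Finset.exists_min_image (univ : Finset α)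
    (fun v => (univ.filter (fun u => ReachIn univ D v u)).card) Finset.univ_nonempty
  set R : α → Finset α := fun v => univ.filter (fun u => ReachIn univ D v u) with hR
  refine ⟨R v₀, ⟨v₀, Finset.mem_filter.mpr ⟨Finset.mem_univ _, ReachIn.refl⟩⟩, ?_, ?_⟩
  · intro p hp h1
    have := (Finset.mem_filter.mp h1).2
    exact Finset.mem_filter.mpr ⟨Finset.mem_univ _,
      this.tail ⟨hp, Finset.mem_univ _, Finset.mem_univ _⟩⟩
  · intro u hu x hx
    have hsub : R u ⊆ R v₀ := by
      intro w hw
      exact Finset.mem_filter.mpr ⟨Finset.mem_univ _,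
        ((Finset.mem_filter.mp hu).2).trans (Finset.mem_filter.mp hw).2⟩
    have heq : R u = R v₀ :=
      Finset.eq_of_subset_of_card_le hsub (hmin u (Finset.mem_univ u))
    rw [← heq] at hx
    exact (Finset.mem_filter.mp hx).2

variable (D : Finset (α × α))

/-- validity of a "sink set" -/
def ValidT (D : Finset (α × α)) (T : Finset α) : Prop :=
  (∀ p ∈ D, p.1 ∈ T → p.2 ∈ T) ∧ AllStrong T D

lemma valid_confine {T : Finset α} (hcl : ∀ p ∈ D, p.1 ∈ T → p.2 ∈ T) {u x : α}
    (h : ReachIn univ D u x) (hu : u ∈ T) : ReachIn T D u x ∧ x ∈ T :=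
  reachIn_confine (fun p hp _ _ h1 => hcl p hp h1) h hu

lemma sink_flip {K₀ : Finset α} (hKne : K₀.Nonempty) (hKcl : ∀ p ∈ D, p.1 ∈ K₀ → p.2 ∈ K₀)
    (hKstr : ∀ u ∈ K₀, ∀ x ∈ K₀, ReachIn univ D u x) {T : Finset α} (hT : ValidT D T) :
    (if K₀ ⊆ T then ValidT D (T \ K₀) ∧ ncomps T D = ncomps (T \ K₀) D + 1
     else ValidT D (T ∪ K₀) ∧ ncomps (T ∪ K₀) D = ncomps T D + 1) := by
  obtain ⟨hcl, hAS⟩ := hT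
  split
  case isTrue hsub =>
    -- backward closure of K₀ inside T
    have hback : ∀ p ∈ D, p.1 ∈ T → p.2 ∈ K₀ → p.1 ∈ K₀ := by
      intro p hp h1 h2
      have harc : ReachIn T D p.1 p.2 := ReachIn.single hp h1 (hsub h2)
      have hrev : ReachIn T D p.2 p.1 := hAS _ _ harc
      exact (reachIn_confine (fun q hq _ _ hk => hKcl q hq hk)
        (reachIn_mono (Finset.subset_univ T) (le_refl D) hrev) h2).2
    have hcl' : ∀ p ∈ D, p.1 ∈ T \ K₀ → p.2 ∈ T \ K₀ := by
      intro p hp h1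
      rcases Finset.mem_sdiff.mp h1 with ⟨h1T, h1K⟩
      exact Finset.mem_sdiff.mpr ⟨hcl p hp h1T, fun hk => h1K (hback p hp h1T hk)⟩
    have hconf' : ∀ {u x : α}, ReachIn T D u x → u ∈ T \ K₀ → ReachIn (T \ K₀) D u x ∧ x ∈ T \ K₀ :=
      fun h hu => reachIn_confine (fun p hp _ _ h1 => hcl' p hp h1) h hu
    have hAS' : AllStrong (T \ K₀) D := by
      intro u x h
      rcases reachIn_cases h with rfl | ⟨hu, hx⟩
      · exact ReachIn.refl
      have hTx : ReachIn T D u x := reachIn_mono Finset.sdiff_subset (le_refl D) h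
      exact (hconf' (hAS _ _ hTx) hx).1
    refine ⟨⟨hcl', hAS'⟩, ?_⟩
    refine ncomps_insert hsub hKne ?_ ?_
    · intro u hu
      ext x
      simp only [mem_compOf]
      constructor
      · rintro ⟨hxT, h1, h2⟩
        exact (reachIn_confine (fun q hq _ _ hk => hKcl q hq hk)
          (reachIn_mono (Finset.subset_univ T) (le_refl D) h1) hu).2
      · intro hx
        refine ⟨hsub hx, (valid_confine D hcl (hKstr u hu x hx) (hsub hu)).1,
          (valid_confine D hcl (hKstr x hx u hu) (hsub hx)).1⟩
    · intro u hu
      ext x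
      simp only [mem_compOf]
      constructor
      · rintro ⟨hxT, h1, h2⟩
        have hxK : x ∉ K₀ := by
          intro hk
          have := (reachIn_confine (fun q hq _ _ hk' => hKcl q hq hk')
            (reachIn_mono (Finset.subset_univ T) (le_refl D) h2) hk).2
          exact (Finset.mem_sdiff.mp hu).2 this
        have hx' : x ∈ T \ K₀ := Finset.mem_sdiff.mpr ⟨hxT, hxK⟩
        exact ⟨hx', (hconf' h1 hu).1, (hconf' h2 hx').1⟩
      · rintro ⟨hxT, h1, h2⟩
        exact ⟨(Finset.mem_sdiff.mp hxT).1,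
          reachIn_mono Finset.sdiff_subset (le_refl D) h1,
          reachIn_mono Finset.sdiff_subset (le_refl D) h2⟩
  case isFalse hnsub =>
    have hdisj : ∀ a ∈ K₀, a ∉ T := by
      intro a ha haT
      refine hnsub fun y hy => ?_
      exact (valid_confine D hcl (hKstr a ha y hy) haT).2
    have hcl' : ∀ p ∈ D, p.1 ∈ T ∪ K₀ → p.2 ∈ T ∪ K₀ := by
      intro p hp h1
      rcases Finset.mem_union.mp h1 with h | h
      · exact Finset.mem_union_left _ (hcl p hp h)
      · exact Finset.mem_union_right _ (hKcl p hp h)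
    have hTeq : (T ∪ K₀) \ K₀ = T := by
      ext x
      simp only [Finset.mem_sdiff, Finset.mem_union]
      constructor
      · rintro ⟨h | h, hk⟩
        · exact h
        · exact absurd h hk
      · intro h
        exact ⟨Or.inl h, fun hk => hdisj x hk h⟩
    have hconfK : ∀ {u x : α}, ReachIn (T ∪ K₀) D u x → u ∈ K₀ →
        ReachIn K₀ D u x ∧ x ∈ K₀ := by
      intro u x h hu
      have := reachIn_confine (T := T ∪ K₀) (S := K₀)
        (fun p hp _ _ h1 => hKcl p hp h1) h hu
      exact ⟨this.1, this.2⟩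
    have hconfT : ∀ {u x : α}, ReachIn (T ∪ K₀) D u x → u ∈ T →
        ReachIn T D u x ∧ x ∈ T := by
      intro u x h hu
      have := reachIn_confine (T := T ∪ K₀) (S := T)
        (fun p hp _ _ h1 => hcl p hp h1) h hu
      exact ⟨this.1, this.2⟩
    have hAS' : AllStrong (T ∪ K₀) D := by
      intro u x h
      rcases reachIn_cases h with rfl | ⟨hu, hx⟩
      · exact ReachIn.refl
      rcases Finset.mem_union.mp hu with huT | huK
      · obtain ⟨hr, hxT⟩ := hconfT h huT
        exact reachIn_mono Finset.subset_union_left (le_refl D) (hAS _ _ hr)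
      · obtain ⟨hr, hxK⟩ := hconfK h huK
        have := hKstr x hxK u huK
        exact reachIn_mono Finset.subset_union_right (le_refl D)
          (valid_confine D hKcl this hxK).1
    refine ⟨⟨hcl', hAS'⟩, ?_⟩
    have := ncomps_insert (T := T ∪ K₀) (K := K₀) Finset.subset_union_right hKne
      (D := D) (Dc := D) ?_ ?_
    · rw [hTeq] at this
      exact this
    · intro u hu
      ext x
      simp only [mem_compOf]
      constructor
      · rintro ⟨hxT, h1, h2⟩
        exact (hconfK h1 hu).2
      · intro hx
        refine ⟨Finset.mem_union_right _ hx, ?_, ?_⟩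
        · exact reachIn_mono Finset.subset_union_right (le_refl D)
            (valid_confine D hKcl (hKstr u hu x hx) hu).1
        · exact reachIn_mono Finset.subset_union_right (le_refl D)
            (valid_confine D hKcl (hKstr x hx u hu) hx).1
    · intro u hu
      rw [hTeq] at hu
      rw [hTeq]
      ext x
      simp only [mem_compOf]
      constructor
      · rintro ⟨hxT, h1, h2⟩
        obtain ⟨hr1, hx1⟩ := hconfT h1 hu
        obtain ⟨hr2, -⟩ := hconfT h2 hx1
        exact ⟨hx1, hr1, hr2⟩
      · rintro ⟨hxT, h1, h2⟩
        exact ⟨Finset.mem_union_left _ hxT,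
          reachIn_mono Finset.subset_union_left (le_refl D) h1,
          reachIn_mono Finset.subset_union_left (le_refl D) h2⟩

lemma valid_sum_zero (D : Finset (α × α)) :
    ∑ T ∈ univ.powerset.filter (ValidT D), (-1:RW) ^ (ncomps T D) = 0 := by
  obtain ⟨K₀, hKne, hKcl, hKstr⟩ := exists_sink D
  refine Finset.sum_involution
    (fun T _ => if K₀ ⊆ T then T \ K₀ else T ∪ K₀) ?_ ?_ ?_ ?_
  · intro T hT
    rcases Finset.mem_filter.mp hT with ⟨-, hV⟩
    have := sink_flip D hKne hKcl hKstr hV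
    beta_reduce
    split at this <;> split
    · rw [this.2, pow_succ]; ring
    · next h1 h2 => exact absurd h1 h2
    · next h1 h2 => exact absurd h2 h1
    · rw [this.2, pow_succ]; ring
  · intro T hT _
    obtain ⟨w, hw⟩ := hKne
    beta_reduce
    split
    · next hsub =>
      intro heq
      have hwT : w ∈ T := hsub hw
      rw [← heq] at hwT
      exact (Finset.mem_sdiff.mp hwT).2 hw
    · next hsub =>
      intro heq
      exact hsub (fun a ha => heq ▸ Finset.mem_union_right T ha)
  · intro T hT
    rcases Finset.mem_filter.mp hT with ⟨-, hV⟩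
    have := sink_flip D hKne hKcl hKstr hV
    beta_reduce
    split at this <;> split
    · exact Finset.mem_filter.mpr ⟨Finset.mem_powerset.mpr (Finset.subset_univ _), this.1⟩
    · next h1 h2 => exact absurd h1 h2
    · next h1 h2 => exact absurd h2 h1
    · exact Finset.mem_filter.mpr ⟨Finset.mem_powerset.mpr (Finset.subset_univ _), this.1⟩
  · intro T hT
    beta_reduce
    split
    · next hsub =>
      have hKnotsub : ¬ K₀ ⊆ T \ K₀ := by
        obtain ⟨w, hw⟩ := hKne
        intro h
        exact (Finset.mem_sdiff.mp (h hw)).2 hw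
      rw [if_neg hKnotsub, Finset.sdiff_union_of_subset hsub]
    · next hsub =>
      have hdisj : ∀ a ∈ K₀, a ∉ T := by
        rcases Finset.mem_filter.mp hT with ⟨-, hcl, hAS⟩
        intro a ha haT
        refine hsub fun y hy => ?_
        exact (valid_confine D hcl (hKstr a ha y hy) haT).2
      rw [if_pos Finset.subset_union_right]
      ext x
      simp only [Finset.mem_sdiff, Finset.mem_union]
      constructor
      · rintro ⟨h | h, hk⟩
        · exact h
        · exact absurd h hk
      · intro h
        exact ⟨Or.inl h, fun hk => hdisj x hk h⟩

end Sink

section B2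
variable {α : Type*} [DecidableEq α] [Fintype α] [Nonempty α]

lemma ncomps_subarcs {T : Finset α} {D D' : Finset (α × α)} (hsub : D' ⊆ D)
    (h' : ∀ p ∈ D, p.1 ∈ T → p.2 ∈ T → p ∈ D') : ncomps T D = ncomps T D' := by
  unfold ncomps
  congr 1
  refine Finset.image_congr fun v hv => ?_
  ext x
  simp only [mem_compOf]
  rw [reachIn_subarcs hsub h', reachIn_subarcs hsub h']

lemma wp_pow_card {γ : Type*} [DecidableEq γ] (F : Finset γ) :
    Wp ^ F.card = ∑ A ∈ F.powerset, (PowerSeries.X : RW) ^ A.card := by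
  have := Finset.sum_pow_mul_eq_add_pow (PowerSeries.X : RW) 1 F
  simp only [one_pow, mul_one] at this
  rw [Wp, add_comm, ← this]

lemma B2_sum :
    ∑ S ∈ (univ : Finset α).powerset,
      Wp ^ ((arcsOn S).card + (S ×ˢ ((univ : Finset α) \ S)).card) * EpolyOn (univ \ S) = 0 := by
  classical
  -- expand each summand as a double sum
  have expand : ∀ S ∈ (univ : Finset α).powerset,
      Wp ^ ((arcsOn S).card + (S ×ˢ ((univ : Finset α) \ S)).card) * EpolyOn (univ \ S) =
      ∑ q ∈ (arcsOn S ∪ S ×ˢ ((univ : Finset α) \ S)).powerset ×ˢ AStSet (univ \ S),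
        (-1:RW) ^ (ncomps (univ \ S) q.2) * (PowerSeries.X : RW) ^ (q.1.card + q.2.card) := by
    intro S hS
    have hdisj : Disjoint (arcsOn S) (S ×ˢ ((univ : Finset α) \ S)) := by
      rw [Finset.disjoint_left]
      intro p hp hp2
      exact (Finset.mem_sdiff.mp (Finset.mem_product.mp hp2).2).2 (mem_arcsOn.mp hp).2.1
    rw [← Finset.card_union_of_disjoint hdisj, wp_pow_card, EpolyOn,
      Finset.sum_mul_sum, Finset.sum_product]
    refine Finset.sum_congr rfl fun A hA => ?_
    refine Finset.sum_congr rfl fun Dc hDc => ?_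
    rw [pow_add]
    ring
  rw [Finset.sum_congr rfl expand, Finset.sum_sigma']
  -- now reindex to pairs (D, T)
  have key : ∑ x ∈ ((univ : Finset α).powerset.sigma
        (fun S => (arcsOn S ∪ S ×ˢ ((univ : Finset α) \ S)).powerset ×ˢ AStSet (univ \ S))),
      (-1:RW) ^ (ncomps (univ \ x.1) x.2.2) * (PowerSeries.X : RW) ^ (x.2.1.card + x.2.2.card)
      = ∑ y ∈ ((arcsOn (univ : Finset α)).powerset.sigma
        (fun D => univ.powerset.filter (ValidT D))),
      (-1:RW) ^ (ncomps y.2 y.1) * (PowerSeries.X : RW) ^ y.1.card := by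
    refine Finset.sum_nbij'
      (i := fun x => ⟨x.2.1 ∪ x.2.2, univ \ x.1⟩)
      (j := fun y => ⟨univ \ y.2, (y.1.filter (fun p => ¬ p.1 ∈ y.2), y.1.filter (fun p => p.1 ∈ y.2))⟩)
      ?_ ?_ ?_ ?_ ?_
    · -- maps to target
      rintro ⟨S, A, Dc⟩ hx
      rcases Finset.mem_sigma.mp hx with ⟨hS, hq⟩
      rcases Finset.mem_product.mp hq with ⟨hA, hDc⟩
      have hA' := Finset.mem_powerset.mp hA
      rcases mem_AStSet.mp hDc with ⟨hDc', hASc⟩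
      have hAsrc : ∀ p ∈ A, p.1 ∈ S := by
        intro p hp
        rcases Finset.mem_union.mp (hA' hp) with h | h
        · exact (mem_arcsOn.mp h).1
        · exact (Finset.mem_product.mp h).1
      have hsubset : A ∪ Dc ⊆ arcsOn (univ : Finset α) := by
        intro p hp
        rcases Finset.mem_union.mp hp with h | h
        · rcases Finset.mem_union.mp (hA' h) with h2 | h2
          · rcases mem_arcsOn.mp h2 with ⟨-, -, h3⟩
            exact mem_arcsOn.mpr ⟨Finset.mem_univ _, Finset.mem_univ _, h3⟩
          · rcases Finset.mem_product.mp h2 with ⟨h3, h4⟩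
            refine mem_arcsOn.mpr ⟨Finset.mem_univ _, Finset.mem_univ _, fun he => ?_⟩
            exact (Finset.mem_sdiff.mp h4).2 (he ▸ h3)
        · rcases mem_arcsOn.mp (hDc' h) with ⟨-, -, h3⟩
          exact mem_arcsOn.mpr ⟨Finset.mem_univ _, Finset.mem_univ _, h3⟩
      have hsubDc : ∀ p ∈ A ∪ Dc, p.1 ∈ univ \ S → p.2 ∈ univ \ S → p ∈ Dc := by
        intro p hp h1 h2
        rcases Finset.mem_union.mp hp with h | h
        · exact absurd (hAsrc p h) (Finset.mem_sdiff.mp h1).2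
        · exact h
      refine Finset.mem_sigma.mpr ⟨Finset.mem_powerset.mpr hsubset,
        Finset.mem_filter.mpr ⟨Finset.mem_powerset.mpr (Finset.sdiff_subset), ?_, ?_⟩⟩
      · -- closed
        intro p hp h1
        rcases Finset.mem_union.mp hp with h | h
        · exact absurd (hAsrc p h) (Finset.mem_sdiff.mp h1).2
        · exact (mem_arcsOn.mp (hDc' h)).2.1
      · -- AllStrong
        intro u v h
        exact (reachIn_subarcs (T := univ \ S) Finset.subset_union_right hsubDc).mp
          (hASc _ _ ((reachIn_subarcs (T := univ \ S)
            Finset.subset_union_right hsubDc).mpr h))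
    · -- j maps to source
      rintro ⟨D, T⟩ hy
      dsimp only
      rcases Finset.mem_sigma.mp hy with ⟨hD, hT⟩
      have hD' := Finset.mem_powerset.mp hD
      rcases Finset.mem_filter.mp hT with ⟨-, hcl, hAS⟩
      have hTT : (univ : Finset α) \ (univ \ T) = T := by
        rw [Finset.sdiff_sdiff_self_left, Finset.inter_eq_right]
        exact Finset.subset_univ T
      refine Finset.mem_sigma.mpr ⟨Finset.mem_powerset.mpr Finset.sdiff_subset,
        Finset.mem_product.mpr ⟨Finset.mem_powerset.mpr ?_, ?_⟩⟩
      · intro p hp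
        rcases Finset.mem_filter.mp hp with ⟨hpD, hp1⟩
        rcases mem_arcsOn.mp (hD' hpD) with ⟨-, -, hne⟩
        have h1 : p.1 ∈ univ \ T := Finset.mem_sdiff.mpr ⟨Finset.mem_univ _, hp1⟩
        by_cases h2 : p.2 ∈ T
        · refine Finset.mem_union_right _ (Finset.mem_product.mpr ⟨h1, ?_⟩)
          rw [hTT]; exact h2
        · exact Finset.mem_union_left _ (mem_arcsOn.mpr
            ⟨h1, Finset.mem_sdiff.mpr ⟨Finset.mem_univ _, h2⟩, hne⟩)
      · rw [hTT]
        refine mem_AStSet.mpr ⟨?_, ?_⟩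
        · intro p hp
          rcases Finset.mem_filter.mp hp with ⟨hpD, hp1⟩
          exact mem_arcsOn.mpr ⟨hp1, hcl p hpD hp1, (mem_arcsOn.mp (hD' hpD)).2.2⟩
        · dsimp only
          intro u v h
          exact (reachIn_subarcs (T := T) (Finset.filter_subset (fun p => p.1 ∈ T) D)
            (fun p hp h1 h2 => Finset.mem_filter.mpr ⟨hp, h1⟩)).mpr
            (hAS _ _ ((reachIn_subarcs (T := T) (Finset.filter_subset (fun p => p.1 ∈ T) D)
            (fun p hp h1 h2 => Finset.mem_filter.mpr ⟨hp, h1⟩)).mp h))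
    · -- left inverse
      rintro ⟨S, A, Dc⟩ hx
      rcases Finset.mem_sigma.mp hx with ⟨hS, hq⟩
      rcases Finset.mem_product.mp hq with ⟨hA, hDc⟩
      have hA' := Finset.mem_powerset.mp hA
      rcases mem_AStSet.mp hDc with ⟨hDc', -⟩
      have hAsrc : ∀ p ∈ A, p.1 ∈ S := by
        intro p hp
        rcases Finset.mem_union.mp (hA' hp) with h | h
        · exact (mem_arcsOn.mp h).1
        · exact (Finset.mem_product.mp h).1
      have hSS : (univ : Finset α) \ (univ \ S) = S := by
        rw [Finset.sdiff_sdiff_self_left, Finset.inter_eq_right]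
        exact Finset.subset_univ S
      have h1 : (A ∪ Dc).filter (fun p => ¬ p.1 ∈ univ \ S) = A := by
        ext p
        simp only [Finset.mem_filter, Finset.mem_union, Finset.mem_sdiff, Finset.mem_univ,
          true_and, not_not]
        constructor
        · rintro ⟨h | h, hp1⟩
          · exact h
          · exact absurd hp1 (Finset.mem_sdiff.mp (mem_arcsOn.mp (hDc' h)).1).2
        · intro h
          exact ⟨Or.inl h, hAsrc p h⟩
      have h2 : (A ∪ Dc).filter (fun p => p.1 ∈ univ \ S) = Dc := by
        ext p
        simp only [Finset.mem_filter, Finset.mem_union]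
        constructor
        · rintro ⟨h | h, hp1⟩
          · exact absurd (hAsrc p h) (Finset.mem_sdiff.mp hp1).2
          · exact h
        · intro h
          exact ⟨Or.inr h, (mem_arcsOn.mp (hDc' h)).1⟩
      dsimp only
      rw [h1, h2, hSS]
    · -- right inverse
      rintro ⟨D, T⟩ hy
      rcases Finset.mem_sigma.mp hy with ⟨hD, hT⟩
      rcases Finset.mem_filter.mp hT with ⟨hTp, -, -⟩
      have hTT : (univ : Finset α) \ (univ \ T) = T := by
        rw [Finset.sdiff_sdiff_self_left, Finset.inter_eq_right]
        exact Finset.subset_univ T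
      dsimp only
      rw [Finset.union_comm, Finset.filter_union_filter_not_eq, hTT]
    · -- values
      rintro ⟨S, A, Dc⟩ hx
      rcases Finset.mem_sigma.mp hx with ⟨hS, hq⟩
      rcases Finset.mem_product.mp hq with ⟨hA, hDc⟩
      have hA' := Finset.mem_powerset.mp hA
      rcases mem_AStSet.mp hDc with ⟨hDc', -⟩
      have hAsrc : ∀ p ∈ A, p.1 ∈ S := by
        intro p hp
        rcases Finset.mem_union.mp (hA' hp) with h | h
        · exact (mem_arcsOn.mp h).1
        · exact (Finset.mem_product.mp h).1
      have hsubDc : ∀ p ∈ A ∪ Dc, p.1 ∈ univ \ S → p.2 ∈ univ \ S → p ∈ Dc := by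
        intro p hp hp1 hp2
        rcases Finset.mem_union.mp hp with h | h
        · exact absurd (hAsrc p h) (Finset.mem_sdiff.mp hp1).2
        · exact h
      have hnc : ncomps (univ \ S) (A ∪ Dc) = ncomps (univ \ S) Dc :=
        ncomps_subarcs Finset.subset_union_right hsubDc
      have hdisj : Disjoint A Dc := by
        rw [Finset.disjoint_left]
        intro p hpA hpD
        exact (Finset.mem_sdiff.mp (mem_arcsOn.mp (hDc' hpD)).1).2 (hAsrc p hpA)
      dsimp only
      rw [hnc, Finset.card_union_of_disjoint hdisj]
  rw [key, Finset.sum_sigma]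
  refine Finset.sum_eq_zero fun D hD => ?_
  dsimp only
  rw [← Finset.sum_mul]
  have hzero := valid_sum_zero (α := α) D
  rw [hzero, zero_mul]

end B2

section Interface

noncomputable def EE (n : ℕ) : RW := EpolyOn (univ : Finset (Fin n))

lemma univ_map_orderEmb {α : Type*} [DecidableEq α] [LinearOrder α] (T : Finset α) :
    (univ : Finset (Fin T.card)).map (T.orderEmbOfFin rfl).toEmbedding = T := by
  ext x
  simp only [Finset.mem_map, Finset.mem_univ, true_and, RelEmbedding.coe_toEmbedding]
  constructor
  · rintro ⟨i, rfl⟩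
    exact Finset.orderEmbOfFin_mem T rfl i
  · intro hx
    have : x ∈ Set.range (T.orderEmbOfFin rfl) := by
      rw [Finset.range_orderEmbOfFin]
      exact hx
    obtain ⟨i, hi⟩ := this
    exact ⟨i, hi⟩

lemma SpolyOn_card {α : Type*} [DecidableEq α] [LinearOrder α] (T : Finset α) :
    SpolyOn T = SpolyOn (univ : Finset (Fin T.card)) := by
  have := SpolyOn_map (T.orderEmbOfFin rfl).toEmbedding (univ : Finset (Fin T.card))
  rw [univ_map_orderEmb] at this
  exact this

lemma EpolyOn_card {α : Type*} [DecidableEq α] [LinearOrder α] (T : Finset α) :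
    EpolyOn T = EE T.card := by
  have := EpolyOn_map (T.orderEmbOfFin rfl).toEmbedding (univ : Finset (Fin T.card))
  rw [univ_map_orderEmb] at this
  exact this

lemma reachIn_univ {n : ℕ} (D : Finset (Fin n × Fin n)) (u v : Fin n) :
    ReachIn univ D u v ↔ Relation.ReflTransGen (fun a b => (a, b) ∈ D) u v := by
  constructor
  · exact ReflTransGen.mono (by intro a b hab; exact hab.1) _ _
  · exact ReflTransGen.mono (p := fun a b => (a, b) ∈ D ∧ a ∈ Finset.univ ∧ b ∈ Finset.univ) (by intro a b hab; exact ⟨hab, Finset.mem_univ _, Finset.mem_univ _⟩) _ _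

lemma sPoly_eq (n : ℕ) : sPoly n = SpolyOn (univ : Finset (Fin n)) := by
  refine PowerSeries.ext fun m => ?_
  rw [sPoly, PowerSeries.coeff_mk, SpolyOn, map_sum]
  have hco : ∀ D ∈ SCSet (univ : Finset (Fin n)),
      PowerSeries.coeff m ((PowerSeries.X : RW) ^ D.card) =
        if m = D.card then (1:ℚ) else 0 := by
    intro D _
    rw [PowerSeries.coeff_X_pow]
  rw [Finset.sum_congr rfl hco, Finset.sum_boole]
  congr 1
  have hsets : (SCSet (univ : Finset (Fin n))).filter (fun D => m = D.card) =
      Finset.univ.filter fun D : Finset (Fin n × Fin n) =>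
        (∀ p ∈ D, p.1 ≠ p.2) ∧ StrongConnD D ∧ D.card = m := by
    ext D
    simp only [Finset.mem_filter, Finset.mem_univ, true_and]
    constructor
    · rintro ⟨hD, hm⟩
      rcases mem_SCSet.mp hD with ⟨hsub, hstr⟩
      refine ⟨fun p hp => (mem_arcsOn.mp (hsub hp)).2.2, ?_, hm.symm⟩
      intro u v
      exact (reachIn_univ D u v).mp (hstr u (Finset.mem_univ u) v (Finset.mem_univ v))
    · rintro ⟨hnl, hsc, hm⟩
      refine ⟨mem_SCSet.mpr ⟨?_, ?_⟩, hm.symm⟩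
      · intro p hp
        exact mem_arcsOn.mpr ⟨Finset.mem_univ _, Finset.mem_univ _, hnl p hp⟩
      · intro u hu v hv
        exact (reachIn_univ D u v).mpr (hsc u v)
  rw [hsets]

lemma EE_zero : EE 0 = 1 := by
  rw [EE]
  have huniv : (univ : Finset (Fin 0)) = ∅ := rfl
  rw [huniv, EpolyOn]
  have harcs : arcsOn (∅ : Finset (Fin 0)) = ∅ := by
    ext p
    simp [mem_arcsOn]
  have hAS : AStSet (∅ : Finset (Fin 0)) = {∅} := by
    rw [AStSet, harcs, Finset.powerset_empty]
    refine Finset.filter_true_of_mem fun D hD => ?_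
    intro u v h
    rcases reachIn_cases h with rfl | ⟨hu, -⟩
    · exact ReachIn.refl
    · exact absurd hu (Finset.notMem_empty u)
  rw [hAS, Finset.sum_singleton]
  have : ncomps (∅ : Finset (Fin 0)) ∅ = 0 := by
    rw [ncomps, Finset.image_empty, Finset.card_empty]
  rw [this]
  simp

lemma EE_succ (n : ℕ) : EE (n+1) = ∑ j ∈ Finset.range (n+1),
    (n.choose j : ℚ) • ((-(sPoly (j+1))) * EE (n-j)) := by
  have h0 : (0 : Fin (n+1)) ∈ (univ : Finset (Fin (n+1))) := Finset.mem_univ _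
  rw [EE, Epoly_decomp (univ : Finset (Fin (n+1))) h0]
  have hterm : ∀ K ∈ (univ : Finset (Fin (n+1))).powerset.filter (fun K => (0:Fin (n+1)) ∈ K),
      (-1 : RW) * (SpolyOn K * EpolyOn (univ \ K)) =
      (-1 : RW) * (sPoly K.card * EE (n + 1 - K.card)) := by
    intro K hK
    rcases Finset.mem_filter.mp hK with ⟨hKp, h0K⟩
    have hKu : K ⊆ univ := Finset.mem_powerset.mp hKp
    rw [SpolyOn_card, ← sPoly_eq, EpolyOn_card]
    congr 2
    rw [Finset.card_sdiff_of_subset hKu, Finset.card_univ, Fintype.card_fin]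
  rw [Finset.sum_congr rfl hterm]
  -- reindex by erasing 0
  have hbij : ∑ K ∈ (univ : Finset (Fin (n+1))).powerset.filter (fun K => (0:Fin (n+1)) ∈ K),
      (-1 : RW) * (sPoly K.card * EE (n + 1 - K.card)) =
      ∑ J ∈ ((univ : Finset (Fin (n+1))).erase 0).powerset,
      (-1 : RW) * (sPoly (J.card + 1) * EE (n - J.card)) := by
    refine Finset.sum_nbij' (i := fun K => K.erase 0) (j := fun J => insert 0 J) ?_ ?_ ?_ ?_ ?_
    · intro K hK
      rcases Finset.mem_filter.mp hK with ⟨hKp, h0K⟩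
      exact Finset.mem_powerset.mpr (Finset.erase_subset_erase _ (Finset.mem_powerset.mp hKp))
    · intro J hJ
      have hJs := Finset.mem_powerset.mp hJ
      refine Finset.mem_filter.mpr ⟨Finset.mem_powerset.mpr (Finset.subset_univ _),
        Finset.mem_insert_self _ _⟩
    · intro K hK
      rcases Finset.mem_filter.mp hK with ⟨-, h0K⟩
      exact Finset.insert_erase h0K
    · intro J hJ
      have hJs := Finset.mem_powerset.mp hJ
      refine Finset.erase_insert fun h0J => ?_
      exact Finset.notMem_erase _ _ (hJs h0J)
    · intro K hK
      rcases Finset.mem_filter.mp hK with ⟨-, h0K⟩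
      have hcard : (K.erase 0).card + 1 = K.card := Finset.card_erase_add_one h0K
      have h2 : n - (K.erase 0).card = n + 1 - K.card := by omega
      rw [hcard, h2]
  rw [hbij]
  have hcarderase : ((univ : Finset (Fin (n+1))).erase 0).card = n := by
    rw [Finset.card_erase_of_mem (Finset.mem_univ _), Finset.card_univ, Fintype.card_fin]
    omega
  rw [Finset.sum_powerset_apply_card (f := fun m => (-1 : RW) * (sPoly (m + 1) * EE (n - m))),
    hcarderase]
  refine Finset.sum_congr rfl fun j hj => ?_
  rw [← Nat.cast_smul_eq_nsmul ℚ]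
  congr 1
  ring

lemma EE_arr (n : ℕ) : arrSum EE n = if n = 0 then 1 else 0 := by
  match n with
  | 0 =>
    rw [arrSum]
    simp [EE_zero]
  | (m+1) =>
    rw [if_neg (Nat.succ_ne_zero m), arrSum]
    have hB2 := B2_sum (α := Fin (m+1))
    have hterm : ∀ S ∈ (univ : Finset (Fin (m+1))).powerset,
        Wp ^ ((arcsOn S).card + (S ×ˢ ((univ : Finset (Fin (m+1))) \ S)).card) *
          EpolyOn (univ \ S) =
        Wp ^ (S.card * (S.card - 1) + S.card * ((m+1) - S.card)) * EE ((m+1) - S.card) := by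
      intro S hS
      rw [card_arcsOn, Finset.card_product, Finset.card_sdiff_of_subset (Finset.subset_univ S),
        Finset.card_univ, Fintype.card_fin, EpolyOn_card]
      congr 2
      rw [Finset.card_sdiff_of_subset (Finset.subset_univ S), Finset.card_univ, Fintype.card_fin]
    rw [Finset.sum_congr rfl hterm] at hB2
    have huniv : ((univ : Finset (Fin (m+1))).powerset) = ((univ : Finset (Fin (m+1))) : Finset _).powerset := rfl
    rw [Finset.sum_powerset_apply_card
      (f := fun k => Wp ^ (k * (k-1) + k * ((m+1) - k)) * EE ((m+1) - k))] at hB2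
    rw [Finset.card_univ, Fintype.card_fin] at hB2
    rw [← hB2]
    refine Finset.sum_congr rfl fun k hk => ?_
    rw [← Nat.cast_smul_eq_nsmul ℚ]

end Interface

/-! ### Assembly -/

lemma constantCoeff_negSCC : PowerSeries.constantCoeff (-SCCgf) = 0 := by
  have : PowerSeries.constantCoeff SCCgf = PowerSeries.coeff 0 SCCgf := by
    simp [PowerSeries.coeff_zero_eq_constantCoeff]
  simp only [map_neg, this, SCCgf, PowerSeries.coeff_mk]
  simp

lemma ncoeff_negSCC (j : ℕ) : ncoeff (j+1) (-SCCgf) = -(sPoly (j+1)) := by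
  rw [ncoeff]
  simp only [map_neg, SCCgf, PowerSeries.coeff_mk]
  simp [smul_smul, mul_inv_cancel₀ (factorial_cast_ne (j+1))]

lemma ncoeff_exp_eq_EE (n : ℕ) : ncoeff n (expSeries (-SCCgf)) = EE n := by
  induction n using Nat.strong_induction_on with
  | _ n ih =>
    match n with
    | 0 => rw [ncoeff_expSeries_zero, EE_zero]
    | (n+1) =>
      rw [expRec constantCoeff_negSCC n, EE_succ n]
      refine Finset.sum_congr rfl fun j hj => ?_
      have hjn : j < n + 1 := mem_range.mp hj
      rw [ncoeff_negSCC, ih (n - j) (by omega)]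

/-- Robinson's identity: `G(z,w) ⊙_z 1/G(z,w)` has constant term `1`
(so its formal logarithm is well-defined), and `exp(−SCC(z,w)) = G(z,w) ⊙_z 1/G(z,w)`. -/
theorem stmt16 :
    PowerSeries.constantCoeff (ehad Ggf (Ring.inverse Ggf)) = 1 ∧
      expSeries (-SCCgf) = ehad Ggf (Ring.inverse Ggf) := by
  have hGinv0 : PowerSeries.constantCoeff (Ring.inverse Ggf) = 1 := by
    have := congrArg (PowerSeries.constantCoeff) Ggf_mul_inv
    rw [map_mul, constantCoeff_Ggf, one_mul, map_one] at this
    exact this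
  constructor
  · have : PowerSeries.constantCoeff (ehad Ggf (Ring.inverse Ggf)) =
        PowerSeries.coeff 0 (ehad Ggf (Ring.inverse Ggf)) := by
      simp [PowerSeries.coeff_zero_eq_constantCoeff]
    rw [this, ehad, PowerSeries.coeff_mk]
    simp [Nat.factorial, PowerSeries.coeff_zero_eq_constantCoeff, constantCoeff_Ggf, hGinv0]
  · have harrE : ∀ n, arrSum (fun m => ncoeff m (expSeries (-SCCgf))) n =
        if n = 0 then 1 else 0 := by
      intro n
      have : (fun m => ncoeff m (expSeries (-SCCgf))) = EE := funext ncoeff_exp_eq_EE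
      rw [this]
      exact EE_arr n
    have := arr_unique harrE stepA
    refine PowerSeries.ext fun n => ?_
    exact ncoeff_inj (this n)
end
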